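/- arXiv:1307.5339 — 9 statements merged into one kernel-verified Lean document; each statement's English description precedes it below -/
import Mathlib

section
/- Let p ≥ 1, let S be a p×p real symmetric positive semidefinite matrix, let λ > 0, let c : {1,…,p} → {1,…,K} be a partition of the indices into K groups, and suppose that |S_{j j'}| ≤ λ for all pairs j, j' with c(j) ≠ c(j'). Then every graphical lasso solution Θ̂ for S with tuning parameter λ satisfies Θ̂_{j j'} = 0 for all pairs j, j' with c(j) ≠ c(j'); that is, Θ̂ is block diagonal with respect to the partition c. -/
open Matrix BigOperators

/-- The graphical lasso objective: log det Θ − tr(SΘ) − λ ∑_{j ≠ j'} |Θ_{jj'}|. -/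
noncomputable def glassoObj {n : Type*} [Fintype n] [DecidableEq n]
    (S : Matrix n n ℝ) (lam : ℝ) (Θ : Matrix n n ℝ) : ℝ :=
  Real.log Θ.det - (S * Θ).trace -
    lam * ∑ j : n, ∑ j' : n, (if j ≠ j' then |Θ j j'| else 0)

/-- A graphical lasso solution: a symmetric positive definite matrix maximizing the
graphical lasso objective over all symmetric positive definite matrices. -/
def IsGlassoSolution {n : Type*} [Fintype n] [DecidableEq n]
    (S : Matrix n n ℝ) (lam : ℝ) (Θhat : Matrix n n ℝ) : Prop :=
  Θhat.IsSymm ∧ Θhat.PosDef ∧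
    ∀ Θ : Matrix n n ℝ, Θ.IsSymm → Θ.PosDef →
      glassoObj S lam Θ ≤ glassoObj S lam Θhat

section Aux

lemma my_trace_eq_sum_eigenvalues {m : Type*} [Fintype m] [DecidableEq m]
    {A : Matrix m m ℝ} (hA : A.IsHermitian) :
    A.trace = ∑ i, hA.eigenvalues i := by
  simpa using hA.trace_eq_sum_eigenvalues

-- strict log-det lemma
open scoped MatrixOrder in
lemma my_logdet_lt {m : Type*} [Fintype m] [DecidableEq m]
    {A B : Matrix m m ℝ} (hA : A.PosDef) (hB : B.PosDef) (hAB : A ≠ B)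
    (htr : (A * B⁻¹).trace = (Fintype.card m : ℝ)) :
    Real.log A.det < Real.log B.det := by
  set R := CFC.sqrt B with hRdef
  have hRpsd : R.PosSemidef := Matrix.nonneg_iff_posSemidef.mp (CFC.sqrt_nonneg B)
  have hRR : R * R = B := CFC.sqrt_mul_sqrt_self B (Matrix.nonneg_iff_posSemidef.mpr hB.posSemidef)
  have hdetB : 0 < B.det := hB.det_pos
  have hdetA : 0 < A.det := hA.det_pos
  have hdetR2 : R.det * R.det = B.det := by rw [← Matrix.det_mul, hRR]
  have hdetRne : R.det ≠ 0 := by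
    intro h; rw [h, mul_zero] at hdetR2; exact hdetB.ne' hdetR2.symm
  have e1 : R * R⁻¹ = 1 := Matrix.mul_nonsing_inv _ hdetRne.isUnit
  have e2 : R⁻¹ * R = 1 := Matrix.nonsing_inv_mul _ hdetRne.isUnit
  have hRinvH : (R⁻¹).IsHermitian := hRpsd.1.inv
  set N := R⁻¹ * A * R⁻¹ with hNdef
  have hNherm : N.IsHermitian := by
    have : Nᴴ = R⁻¹ᴴ * Aᴴ * R⁻¹ᴴ := by
      simp [hNdef, Matrix.conjTranspose_mul, Matrix.mul_assoc]
    rw [Matrix.IsHermitian, this, hRinvH.eq, hA.1.eq]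
  have hANR : A = R * N * R := by
    calc A = (R * R⁻¹) * A * (R⁻¹ * R) := by rw [e1, e2, one_mul, mul_one]
    _ = R * N * R := by simp only [hNdef, Matrix.mul_assoc]
  have hNpd : N.PosDef := by
    refine Matrix.PosDef.of_dotProduct_mulVec_pos hNherm fun x hx => ?_
    have hy : R⁻¹ *ᵥ x ≠ 0 := by
      intro h
      apply hx
      have := congrArg (R *ᵥ ·) h
      simpa [Matrix.mulVec_mulVec, e1] using this
    have := hA.dotProduct_mulVec_pos hy
    have hrw : star x ⬝ᵥ (N *ᵥ x) = star (R⁻¹ *ᵥ x) ⬝ᵥ (A *ᵥ (R⁻¹ *ᵥ x)) := by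
      have hs : ∀ v : m → ℝ, star v = v := fun v => by ext i; simp
      simp only [hNdef, ← Matrix.mulVec_mulVec, hs]
      rw [Matrix.dotProduct_mulVec x, ← Matrix.mulVec_transpose]
      have : R⁻¹ᵀ = R⁻¹ := by
        have := hRinvH.eq
        rwa [Matrix.conjTranspose_eq_transpose_of_trivial] at this
      rw [this]
    rw [hrw]; exact this
  set μ := hNherm.eigenvalues with hμ
  have hμpos : ∀ i, 0 < μ i := hNpd.eigenvalues_pos
  have hdetN : N.det = A.det / B.det := by
    have : (R⁻¹).det = (R.det)⁻¹ := by
      rw [Matrix.det_nonsing_inv, Ring.inverse_eq_inv']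
    rw [hNdef, Matrix.det_mul, Matrix.det_mul, this]
    field_simp [← hdetR2]
    rw [← hdetR2]; ring
  have htrN : N.trace = (Fintype.card m : ℝ) := by
    have hRinv2 : R⁻¹ * R⁻¹ = B⁻¹ := by rw [← Matrix.mul_inv_rev, hRR]
    calc N.trace = (R⁻¹ * (A * R⁻¹)).trace := by rw [hNdef, Matrix.mul_assoc]
    _ = ((A * R⁻¹) * R⁻¹).trace := Matrix.trace_mul_comm _ _
    _ = (A * B⁻¹).trace := by rw [Matrix.mul_assoc, hRinv2]
    _ = _ := htr
  have hprod : ∏ i, μ i = A.det / B.det := by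
    have := hNherm.det_eq_prod_eigenvalues
    rw [hdetN] at this
    simpa using this.symm
  have hsum : ∑ i, μ i = (Fintype.card m : ℝ) := by
    rw [← my_trace_eq_sum_eigenvalues hNherm, htrN]
  -- exists an eigenvalue ≠ 1
  have hex : ∃ i, μ i ≠ 1 := by
    by_contra h
    push_neg at h
    apply hAB
    have hdiag : Matrix.diagonal (RCLike.ofReal ∘ μ) = (1 : Matrix m m ℝ) := by
      have : (RCLike.ofReal ∘ μ : m → ℝ) = fun _ => 1 := by
        funext i; simp [h i]
      rw [this, Matrix.diagonal_one]
    have hN1 : N = 1 := by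
      conv_lhs => rw [hNherm.spectral_theorem]
      rw [hdiag, map_one]
    rw [hANR, hN1, mul_one, hRR]
  obtain ⟨i0, hi0⟩ := hex
  have hlt : ∑ i, Real.log (μ i) < ∑ i, (μ i - 1) := by
    refine Finset.sum_lt_sum (fun i _ => Real.log_le_sub_one_of_pos (hμpos i)) ⟨i0, Finset.mem_univ _, Real.log_lt_sub_one_of_pos (hμpos i0) hi0⟩
  have hsum1 : ∑ i, (μ i - 1) = 0 := by
    rw [Finset.sum_sub_distrib, hsum]
    simp
  have hlog : ∑ i, Real.log (μ i) = Real.log A.det - Real.log B.det := by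
    rw [← Real.log_prod (fun i _ => (hμpos i).ne'), hprod,
      Real.log_div hdetA.ne' hdetB.ne']
  rw [hlog, hsum1] at hlt
  linarith

end Aux

/-- if all between-cluster entries of S are ≤ λ in absolute value, then every
graphical lasso solution is block diagonal with respect to the partition. -/
theorem glasso_block_diagonal_of_small_between_cluster_entries
    {p K : ℕ} (hp : 1 ≤ p)
    (S : Matrix (Fin p) (Fin p) ℝ) (hSsymm : S.IsSymm) (hSpsd : S.PosSemidef)
    (lam : ℝ) (hlam : 0 < lam)
    (c : Fin p → Fin K) (hc : Function.Surjective c)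
    (hsmall : ∀ j j' : Fin p, c j ≠ c j' → |S j j'| ≤ lam) :
    ∀ Θhat : Matrix (Fin p) (Fin p) ℝ, IsGlassoSolution S lam Θhat →
      ∀ j j' : Fin p, c j ≠ c j' → Θhat j j' = 0 := by
  intro M hsol j j' hcc
  obtain ⟨hMsymm, hMpd, hopt⟩ := hsol
  have hsym : ∀ a b, M b a = M a b := fun a b => congrFun (congrFun hMsymm a) b
  have htrace_mul : ∀ (A B : Matrix (Fin p) (Fin p) ℝ),
      (A * B).trace = ∑ a, ∑ b, A a b * B b a := fun A B => by
    simp [Matrix.trace, Matrix.mul_apply]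
  set D : Matrix (Fin p) (Fin p) ℝ :=
    Matrix.of (fun a b => if c a = c b then M a b else 0) with hD
  have hDapp : ∀ a b, D a b = if c a = c b then M a b else 0 := fun a b => rfl
  suffices hMD : M = D by
    rw [hMD, hDapp, if_neg hcc]
  by_contra hne
  -- D is symmetric
  have hDsymm : D.IsSymm := by
    ext a b
    rw [Matrix.transpose_apply, hDapp, hDapp]
    by_cases h : c a = c b
    · rw [if_pos h, if_pos h.symm, hsym]
    · rw [if_neg h, if_neg (fun hh => h hh.symm)]
  -- D is positive definite
  have hDpd : D.PosDef := by
    refine Matrix.PosDef.of_dotProduct_mulVec_pos ?_ ?_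
    · rw [Matrix.IsHermitian]
      ext a b
      rw [Matrix.conjTranspose_apply, star_trivial]
      exact congrFun (congrFun hDsymm a) b
    · intro x hx
      have hstar : star x = x := by ext i; simp
      rw [hstar]
      have key : x ⬝ᵥ (D *ᵥ x) =
          ∑ k : Fin K, ((fun a => if c a = k then x a else 0) ⬝ᵥ
            (M *ᵥ (fun a => if c a = k then x a else 0))) := by
        have lhs : x ⬝ᵥ (D *ᵥ x) =
            ∑ a, ∑ b, (if c a = c b then x a * (M a b * x b) else 0) := by
          simp only [dotProduct, Matrix.mulVec, dotProduct, hDapp,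
            Finset.mul_sum, ite_mul, zero_mul, mul_ite, mul_zero]
        have rhs : ∀ k : Fin K, ((fun a => if c a = k then x a else 0) ⬝ᵥ
            (M *ᵥ (fun a => if c a = k then x a else 0))) =
            ∑ a, ∑ b, (if c a = k ∧ c b = k then x a * (M a b * x b) else 0) := by
          intro k
          simp only [dotProduct, Matrix.mulVec, dotProduct,
            Finset.mul_sum, ite_mul, zero_mul, mul_ite, mul_zero]
          refine Finset.sum_congr rfl fun a _ => Finset.sum_congr rfl fun b _ => ?_
          by_cases h1 : c a = k <;> by_cases h2 : c b = k <;>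
            simp [h1, h2]
        have hker : ∀ a b : Fin p, (∑ k : Fin K,
            (if c a = k ∧ c b = k then x a * (M a b * x b) else 0)) =
            (if c a = c b then x a * (M a b * x b) else 0) := by
          intro a b
          by_cases h : c a = c b
          · rw [if_pos h, Finset.sum_eq_single (c a)]
            · rw [if_pos ⟨rfl, h.symm⟩]
            · intro k _ hk
              rw [if_neg (fun hh => hk hh.1.symm)]
            · intro h'; exact absurd (Finset.mem_univ _) h'
          · rw [if_neg h]
            refine Finset.sum_eq_zero fun k _ => ?_
            rw [if_neg (fun hh => h (hh.1.trans hh.2.symm))]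
        rw [lhs]
        simp only [rhs]
        refine Eq.symm ?_
        calc (∑ k : Fin K, ∑ a, ∑ b,
              (if c a = k ∧ c b = k then x a * (M a b * x b) else 0))
            = ∑ a, ∑ k : Fin K, ∑ b,
              (if c a = k ∧ c b = k then x a * (M a b * x b) else 0) :=
              Finset.sum_comm
          _ = ∑ a, ∑ b, ∑ k : Fin K,
              (if c a = k ∧ c b = k then x a * (M a b * x b) else 0) :=
              Finset.sum_congr rfl fun a _ => Finset.sum_comm
          _ = ∑ a, ∑ b, (if c a = c b then x a * (M a b * x b) else 0) :=
              Finset.sum_congr rfl fun a _ => Finset.sum_congr rfl fun b _ => hker a b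
        
      rw [key]
      obtain ⟨j0, hj0⟩ : ∃ i, x i ≠ 0 := by
        by_contra h; push_neg at h; exact hx (funext h)
      have hxk : (fun a => if c a = c j0 then x a else 0) ≠ 0 := by
        intro h
        have := congrFun h j0
        simp at this
        exact hj0 this
      refine Finset.sum_pos' (fun k _ => ?_) ⟨c j0, Finset.mem_univ _, ?_⟩
      · have := hMpd.posSemidef.dotProduct_mulVec_nonneg (fun a => if c a = k then x a else 0)
        have hstar' : star (fun a => if c a = k then x a else 0) =
            (fun a => if c a = k then x a else 0) := by ext i; simp
        rwa [hstar'] at this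
      · have := hMpd.dotProduct_mulVec_pos hxk
        have hstar' : star (fun a => if c a = c j0 then x a else 0) =
            (fun a => if c a = c j0 then x a else 0) := by ext i; simp
        rwa [hstar'] at this
  have hdetDne : D.det ≠ 0 := hDpd.det_pos.ne'
  -- the inverse of D is block diagonal
  set E : Matrix (Fin p) (Fin p) ℝ :=
    Matrix.of (fun a b => if c a = c b then D⁻¹ a b else 0) with hE
  have hEapp : ∀ a b, E a b = if c a = c b then D⁻¹ a b else 0 := fun a b => rfl
  have hDE : D * E = 1 := by
    ext a b
    rw [Matrix.mul_apply]
    by_cases h : c a = c b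
    · have : ∀ e, D a e * E e b = D a e * D⁻¹ e b := by
        intro e
        rw [hDapp, hEapp]
        by_cases he : c a = c e
        · rw [if_pos he, if_pos (he.symm.trans h)]
        · rw [if_neg he, zero_mul, zero_mul]
      simp only [this]
      rw [← Matrix.mul_apply, Matrix.mul_nonsing_inv _ hdetDne.isUnit]
    · have hab : a ≠ b := fun hh => h (hh ▸ rfl)
      rw [Matrix.one_apply_ne hab]
      refine Finset.sum_eq_zero fun e _ => ?_
      rw [hDapp, hEapp]
      by_cases he : c a = c e
      · rw [if_neg (fun hh => h (he.trans hh)), mul_zero]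
      · rw [if_neg he, zero_mul]
  have hDinv : D⁻¹ = E := Matrix.inv_eq_right_inv hDE
  -- trace (M * D⁻¹) = p
  have htr : (M * D⁻¹).trace = (Fintype.card (Fin p) : ℝ) := by
    have h1 : (M * D⁻¹).trace = (D * D⁻¹).trace := by
      rw [hDinv, htrace_mul, htrace_mul]
      refine Finset.sum_congr rfl fun a _ => Finset.sum_congr rfl fun e _ => ?_
      rw [hDapp, hEapp]
      by_cases he : c e = c a
      · rw [if_pos he, if_pos he.symm]
      · rw [if_neg he, if_neg (fun hh => he hh.symm), mul_zero, zero_mul]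
    rw [h1, Matrix.mul_nonsing_inv _ hdetDne.isUnit, Matrix.trace_one]
  -- strict log det inequality
  have hld : Real.log M.det < Real.log D.det := my_logdet_lt hMpd hDpd hne htr
  -- compare objectives
  have hle := hopt D hDsymm hDpd
  -- trace difference
  have h1 : (S * M).trace - (S * D).trace =
      ∑ a, ∑ b, (if c a = c b then 0 else S a b * M b a) := by
    rw [htrace_mul, htrace_mul, ← Finset.sum_sub_distrib]
    refine Finset.sum_congr rfl fun a _ => ?_
    rw [← Finset.sum_sub_distrib]
    refine Finset.sum_congr rfl fun b _ => ?_
    by_cases h : c a = c b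
    · rw [hDapp, if_pos (h.symm : c b = c a), if_pos h, sub_self]
    · rw [hDapp, if_neg (fun hh => h hh.symm : ¬ c b = c a), if_neg h, mul_zero, sub_zero]
  -- penalty difference
  have h2 : (∑ a : Fin p, ∑ b : Fin p, (if a ≠ b then |M a b| else 0)) -
      (∑ a : Fin p, ∑ b : Fin p, (if a ≠ b then |D a b| else 0)) =
      ∑ a, ∑ b, (if c a = c b then 0 else |M a b|) := by
    rw [← Finset.sum_sub_distrib]
    refine Finset.sum_congr rfl fun a _ => ?_
    rw [← Finset.sum_sub_distrib]
    refine Finset.sum_congr rfl fun b _ => ?_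
    by_cases h : c a = c b
    · simp [hDapp, h]
    · have hab : a ≠ b := fun hh => h (hh ▸ rfl)
      simp [hDapp, h, hab]
  -- each cross term is nonnegative
  have hQ : 0 ≤ ∑ a, ∑ b, (if c a = c b then 0 else S a b * M b a + lam * |M a b|) := by
    refine Finset.sum_nonneg fun a _ => Finset.sum_nonneg fun b _ => ?_
    by_cases h : c a = c b
    · rw [if_pos h]
    · rw [if_neg h]
      have hS := hsmall a b h
      have habs : |M a b| = |M b a| := by rw [hsym]
      have h3 : -(lam * |M b a|) ≤ S a b * M b a := by
        have := neg_abs_le (S a b * M b a)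
        have h4 : |S a b * M b a| ≤ lam * |M b a| := by
          rw [abs_mul]
          exact mul_le_mul_of_nonneg_right hS (abs_nonneg _)
        linarith
      rw [habs]; linarith
  -- combine
  have hcomb : ((S * M).trace + lam * ∑ a : Fin p, ∑ b : Fin p, (if a ≠ b then |M a b| else 0))
      - ((S * D).trace + lam * ∑ a : Fin p, ∑ b : Fin p, (if a ≠ b then |D a b| else 0)) =
      ∑ a, ∑ b, (if c a = c b then 0 else S a b * M b a + lam * |M a b|) := by
    have expand : ∑ a, ∑ b, (if c a = c b then 0 else S a b * M b a + lam * |M a b|) =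
        (∑ a, ∑ b, (if c a = c b then 0 else S a b * M b a)) +
        lam * (∑ a, ∑ b, (if c a = c b then 0 else |M a b|)) := by
      rw [Finset.mul_sum, ← Finset.sum_add_distrib]
      refine Finset.sum_congr rfl fun a _ => ?_
      rw [Finset.mul_sum, ← Finset.sum_add_distrib]
      refine Finset.sum_congr rfl fun b _ => ?_
      by_cases h : c a = c b
      · simp [h]
      · simp [h]
    rw [expand, ← h1, ← h2]
    ring
  unfold glassoObj at hle
  linarith [hQ, hcomb, hle, hld]
end

section
/- Let p ≥ 1, let S be a p×p real symmetric positive semidefinite matrix, let λ > 0, let c : {1,…,p} → {1,…,K} be a partition of the indices, and suppose that |S_{j j'}| ≤ λ for all pairs j, j' with c(j) ≠ c(j'). If Θ̂ is a graphical lasso solution for S with tuning parameter λ, then for each k ∈ {1,…,K} the principal submatrix of Θ̂ indexed by c⁻¹(k) is a graphical lasso solution, with the same tuning parameter λ, for the principal submatrix of S indexed by c⁻¹(k). -/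
open Matrix BigOperators

namespace GlassoAux

set_option linter.unusedSectionVars false

variable {m m' : Type*} [Fintype m] [DecidableEq m] [Fintype m'] [DecidableEq m']
variable {n : Type*} [Fintype n] [DecidableEq n]

lemma psd_det_nonneg {X : Matrix n n ℝ} (hX : X.PosSemidef) : 0 ≤ X.det := by
  rw [hX.1.det_eq_prod_eigenvalues]
  exact Finset.prod_nonneg fun i _ => hX.eigenvalues_nonneg i

lemma one_le_det_one_add {Q : Matrix n n ℝ} (hQ : Q.PosSemidef) : 1 ≤ (1 + Q).det := by
  have h := hQ.1
  have hU : (h.eigenvectorUnitary : Matrix n n ℝ) * star (h.eigenvectorUnitary : Matrix n n ℝ) = 1 :=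
    Matrix.mem_unitaryGroup_iff.mp h.eigenvectorUnitary.2
  have key : 1 + Q = (h.eigenvectorUnitary : Matrix n n ℝ) *
      (1 + diagonal (RCLike.ofReal ∘ h.eigenvalues)) * star (h.eigenvectorUnitary : Matrix n n ℝ) := by
    rw [mul_add, add_mul, mul_one]
    rw [hU]
    conv_lhs => rw [h.spectral_theorem, Unitary.conjStarAlgAut_apply]
  rw [key, Matrix.det_mul_right_comm, hU, one_mul]
  have : (1 : Matrix n n ℝ) + diagonal (RCLike.ofReal ∘ h.eigenvalues) =
      diagonal (fun i => 1 + h.eigenvalues i) := by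
    rw [← Matrix.diagonal_one, Matrix.diagonal_add]
    congr 1
  rw [this, Matrix.det_diagonal]
  calc (1:ℝ) = ∏ _i : n, 1 := by simp
  _ ≤ ∏ i : n, (1 + h.eigenvalues i) :=
    Finset.prod_le_prod (fun i _ => by norm_num) (fun i _ => by linarith [hQ.eigenvalues_nonneg i])

open scoped MatrixOrder in
lemma det_le_det_add {X P : Matrix n n ℝ} (hX : X.PosSemidef) (hP : P.PosSemidef) :
    X.det ≤ (X + P).det := by
  by_cases h0 : X.det = 0
  · rw [h0]; exact psd_det_nonneg (hX.add hP)
  · set R := CFC.sqrt X with hRdef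
    have hR : R.PosSemidef := (CFC.sqrt_nonneg X).posSemidef
    have hRR : R * R = X := CFC.sqrt_mul_sqrt_self X hX.nonneg
    have hRdet : R.det ≠ 0 := by
      intro h
      apply h0
      rw [← hRR, det_mul, h, mul_zero]
    have hRu : IsUnit R.det := isUnit_iff_ne_zero.2 hRdet
    have hRinv : (R⁻¹)ᴴ = R⁻¹ := hR.1.inv
    have hQ : (R⁻¹ * P * R⁻¹).PosSemidef := by
      have := hP.conjTranspose_mul_mul_same (B := R⁻¹)
      rwa [hRinv] at this
    have key : X + P = R * (1 + R⁻¹ * P * R⁻¹) * R := by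
      rw [mul_add, add_mul, mul_one, hRR]
      congr 1
      rw [Matrix.mul_assoc, Matrix.mul_assoc, Matrix.nonsing_inv_mul R hRu, Matrix.mul_one,
        ← Matrix.mul_assoc, Matrix.mul_nonsing_inv R hRu, Matrix.one_mul]
    rw [key, det_mul, det_mul]
    have h1 : (1:ℝ) ≤ (1 + R⁻¹ * P * R⁻¹).det := one_le_det_one_add hQ
    have hXdet : X.det = R.det * R.det := by rw [← hRR, det_mul]
    nlinarith [psd_det_nonneg hX, hXdet ▸ (psd_det_nonneg hX)]

lemma posDef_toBlocks₁₁ {M : Matrix (m ⊕ m') (m ⊕ m') ℝ} (hM : M.PosDef) :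
    M.toBlocks₁₁.PosDef := by
  rw [posDef_iff_dotProduct_mulVec]
  constructor
  · ext i j
    simpa [Matrix.toBlocks₁₁] using congrFun (congrFun hM.1 (Sum.inl i)) (Sum.inl j)
  · intro x hx
    have hy : (Sum.elim x 0 : m ⊕ m' → ℝ) ≠ 0 := by
      intro h
      apply hx
      ext i
      exact congrFun h (Sum.inl i)
    have := (posDef_iff_dotProduct_mulVec.mp hM).2 hy
    simpa [Matrix.toBlocks₁₁, dotProduct, Matrix.mulVec, Fintype.sum_sum_type] using this

lemma posDef_toBlocks₂₂ {M : Matrix (m ⊕ m') (m ⊕ m') ℝ} (hM : M.PosDef) :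
    M.toBlocks₂₂.PosDef := by
  rw [posDef_iff_dotProduct_mulVec]
  constructor
  · ext i j
    simpa [Matrix.toBlocks₂₂] using congrFun (congrFun hM.1 (Sum.inr i)) (Sum.inr j)
  · intro x hx
    have hy : (Sum.elim 0 x : m ⊕ m' → ℝ) ≠ 0 := by
      intro h
      apply hx
      ext i
      exact congrFun h (Sum.inr i)
    have := (posDef_iff_dotProduct_mulVec.mp hM).2 hy
    simpa [Matrix.toBlocks₂₂, dotProduct, Matrix.mulVec, Fintype.sum_sum_type] using this

lemma posDef_fromBlocks_diag {X : Matrix m m ℝ} {Y : Matrix m' m' ℝ}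
    (hX : X.PosDef) (hY : Y.PosDef) : (fromBlocks X 0 0 Y).PosDef := by
  rw [posDef_iff_dotProduct_mulVec]
  constructor
  · show (fromBlocks X 0 0 Y)ᴴ = _
    rw [Matrix.fromBlocks_conjTranspose]
    simp only [conjTranspose_zero]
    rw [hX.1.eq, hY.1.eq]
  · intro z hz
    have key : dotProduct (star z) (fromBlocks X 0 0 Y *ᵥ z) =
        dotProduct (star (z ∘ Sum.inl)) (X *ᵥ (z ∘ Sum.inl)) +
        dotProduct (star (z ∘ Sum.inr)) (Y *ᵥ (z ∘ Sum.inr)) := by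
      simp [dotProduct, Matrix.mulVec, Fintype.sum_sum_type, Matrix.fromBlocks,
        Finset.sum_add_distrib, Function.comp]
    rw [key]
    by_cases h1 : z ∘ Sum.inl = 0
    · have h2 : z ∘ Sum.inr ≠ 0 := by
        intro h2
        apply hz
        ext (i | i)
        · exact congrFun h1 i
        · exact congrFun h2 i
      have := (posDef_iff_dotProduct_mulVec.mp hY).2 h2
      have := (posSemidef_iff_dotProduct_mulVec.mp hX.posSemidef).2 (z ∘ Sum.inl)
      linarith
    · have := (posDef_iff_dotProduct_mulVec.mp hX).2 h1
      have := (posSemidef_iff_dotProduct_mulVec.mp hY.posSemidef).2 (z ∘ Sum.inr)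
      linarith

lemma fischer {M : Matrix (m ⊕ m') (m ⊕ m') ℝ} (hM : M.PosDef) :
    M.det ≤ M.toBlocks₁₁.det * M.toBlocks₂₂.det := by
  set A := M.toBlocks₁₁ with hA'
  set B := M.toBlocks₁₂ with hB'
  set D := M.toBlocks₂₂ with hD'
  have hA : A.PosDef := posDef_toBlocks₁₁ hM
  haveI : Invertible A := A.invertibleOfIsUnitDet (isUnit_iff_ne_zero.2 hA.det_pos.ne')
  have hC : M.toBlocks₂₁ = Bᴴ := by
    ext i j
    simpa [Matrix.toBlocks₂₁, Matrix.toBlocks₁₂, hB'] using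
      (congrFun (congrFun hM.1 (Sum.inr i)) (Sum.inl j)).symm
  have hMeq : M = fromBlocks A B Bᴴ D := by
    rw [← hC, hA', hB', hD', Matrix.fromBlocks_toBlocks]
  have hschur : (D - Bᴴ * A⁻¹ * B).PosSemidef := by
    rw [← Matrix.PosDef.fromBlocks₁₁ B D hA]
    rw [← hMeq]
    exact hM.posSemidef
  have hP : (Bᴴ * A⁻¹ * B).PosSemidef :=
    hA.inv.posSemidef.conjTranspose_mul_mul_same (B := B)
  have hdet : M.det = A.det * (D - Bᴴ * A⁻¹ * B).det := by
    rw [hMeq, Matrix.det_fromBlocks₁₁, Matrix.invOf_eq_nonsing_inv]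
  rw [hdet]
  have h1 : (D - Bᴴ * A⁻¹ * B).det ≤ D.det := by
    have := det_le_det_add hschur hP
    rwa [sub_add_cancel] at this
  exact mul_le_mul_of_nonneg_left h1 hA.det_pos.le

lemma obj_eq (S : Matrix n n ℝ) (lam : ℝ) (M : Matrix n n ℝ) :
    glassoObj S lam M = Real.log M.det -
      ∑ a : n, ∑ b : n, (S a b * M b a + lam * if a ≠ b then |M a b| else 0) := by
  unfold glassoObj
  rw [Matrix.trace]
  simp only [Matrix.diag, Matrix.mul_apply, Finset.sum_add_distrib, Finset.mul_sum]
  ring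

lemma obj_fromBlocks (S : Matrix (m ⊕ m') (m ⊕ m') ℝ) (lam : ℝ)
    (X : Matrix m m ℝ) (Y : Matrix m' m' ℝ) (hX : 0 < X.det) (hY : 0 < Y.det) :
    glassoObj S lam (fromBlocks X 0 0 Y) =
      glassoObj S.toBlocks₁₁ lam X + glassoObj S.toBlocks₂₂ lam Y := by
  rw [obj_eq, obj_eq, obj_eq, Matrix.det_fromBlocks_zero₂₁, Real.log_mul hX.ne' hY.ne']
  simp only [Fintype.sum_sum_type, Matrix.fromBlocks_apply₁₁, Matrix.fromBlocks_apply₁₂,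
    Matrix.fromBlocks_apply₂₁, Matrix.fromBlocks_apply₂₂, Matrix.toBlocks₁₁, Matrix.toBlocks₂₂,
    Matrix.of_apply, ne_eq, Sum.inl.injEq, Sum.inr.injEq, Matrix.zero_apply, abs_zero, mul_zero,
    zero_add, add_zero, if_true, reduceCtorEq, not_false_eq_true, ite_true, ite_false,
    Finset.sum_add_distrib, Finset.sum_const_zero]
  ring_nf

lemma cross_term {lam s θ : ℝ} (hs : |s| ≤ lam) : 0 ≤ s * θ + lam * |θ| := by
  have h1 : |s * θ| ≤ lam * |θ| := by
    rw [abs_mul]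
    exact mul_le_mul_of_nonneg_right hs (abs_nonneg _)
  have := (abs_le.1 h1).1
  linarith

lemma comparison (S : Matrix (m ⊕ m') (m ⊕ m') ℝ) (lam : ℝ)
    (hsmall : ∀ (i : m) (j : m'),
      |S (Sum.inl i) (Sum.inr j)| ≤ lam ∧ |S (Sum.inr j) (Sum.inl i)| ≤ lam)
    {Θ : Matrix (m ⊕ m') (m ⊕ m') ℝ} (hsym : Θ.IsSymm) (hpd : Θ.PosDef) :
    glassoObj S lam Θ ≤ glassoObj S lam (fromBlocks Θ.toBlocks₁₁ 0 0 Θ.toBlocks₂₂) := by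
  rw [obj_eq, obj_eq]
  have hlog : Real.log Θ.det ≤ Real.log (fromBlocks Θ.toBlocks₁₁ 0 0 Θ.toBlocks₂₂).det := by
    rw [Matrix.det_fromBlocks_zero₂₁]
    exact Real.log_le_log hpd.det_pos (fischer hpd)
  have hΘsymm : ∀ a b : m ⊕ m', Θ b a = Θ a b := by
    intro a b
    exact (congrFun (congrFun hsym a) b).symm ▸ rfl
  have hsum : ∑ a : m ⊕ m', ∑ b : m ⊕ m',
        ((S a b * (fromBlocks Θ.toBlocks₁₁ 0 0 Θ.toBlocks₂₂) b a +
          lam * if a ≠ b then |(fromBlocks Θ.toBlocks₁₁ 0 0 Θ.toBlocks₂₂) a b| else 0)) ≤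
      ∑ a : m ⊕ m', ∑ b : m ⊕ m',
        (S a b * Θ b a + lam * if a ≠ b then |Θ a b| else 0) := by
    refine Finset.sum_le_sum fun a _ => Finset.sum_le_sum fun b _ => ?_
    rcases a with i | i <;> rcases b with j | j
    · simp [Matrix.fromBlocks_apply₁₁, Matrix.toBlocks₁₁]
    · have hTh : Θ (Sum.inr j) (Sum.inl i) = Θ (Sum.inl i) (Sum.inr j) := hΘsymm _ _
      simp only [Matrix.fromBlocks_apply₁₂, Matrix.zero_apply, mul_zero, abs_zero, ne_eq,
        reduceCtorEq, not_false_eq_true, ite_true, zero_add, if_true]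
      rw [hTh]
      simpa using cross_term (θ := Θ (Sum.inl i) (Sum.inr j)) (hsmall i j).1
    · have hTh : Θ (Sum.inl j) (Sum.inr i) = Θ (Sum.inr i) (Sum.inl j) := hΘsymm _ _
      simp only [Matrix.fromBlocks_apply₂₁, Matrix.zero_apply, mul_zero, abs_zero, ne_eq,
        reduceCtorEq, not_false_eq_true, ite_true, zero_add, if_true]
      rw [hTh]
      simpa using cross_term (θ := Θ (Sum.inr i) (Sum.inl j)) (hsmall j i).2
    · simp [Matrix.fromBlocks_apply₂₂, Matrix.toBlocks₂₂]
  linarith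

lemma toBlocks₁₁_isSymm {Θ : Matrix (m ⊕ m') (m ⊕ m') ℝ} (h : Θ.IsSymm) :
    Θ.toBlocks₁₁.IsSymm := by
  ext i j
  simp only [Matrix.transpose_apply, Matrix.toBlocks₁₁, Matrix.of_apply]
  exact (congrFun (congrFun h (Sum.inl i)) (Sum.inl j))

lemma toBlocks₂₂_isSymm {Θ : Matrix (m ⊕ m') (m ⊕ m') ℝ} (h : Θ.IsSymm) :
    Θ.toBlocks₂₂.IsSymm := by
  ext i j
  simp only [Matrix.transpose_apply, Matrix.toBlocks₂₂, Matrix.of_apply]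
  exact (congrFun (congrFun h (Sum.inr i)) (Sum.inr j))

lemma key (S : Matrix (m ⊕ m') (m ⊕ m') ℝ) (lam : ℝ)
    (hsmall : ∀ (i : m) (j : m'),
      |S (Sum.inl i) (Sum.inr j)| ≤ lam ∧ |S (Sum.inr j) (Sum.inl i)| ≤ lam)
    {Θ : Matrix (m ⊕ m') (m ⊕ m') ℝ} (hΘ : IsGlassoSolution S lam Θ) :
    IsGlassoSolution S.toBlocks₁₁ lam Θ.toBlocks₁₁ := by
  obtain ⟨hsym, hpd, hopt⟩ := hΘ
  have hA : Θ.toBlocks₁₁.PosDef := posDef_toBlocks₁₁ hpd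
  have hD : Θ.toBlocks₂₂.PosDef := posDef_toBlocks₂₂ hpd
  have hAs : Θ.toBlocks₁₁.IsSymm := toBlocks₁₁_isSymm hsym
  have hDs : Θ.toBlocks₂₂.IsSymm := toBlocks₂₂_isSymm hsym
  refine ⟨hAs, hA, fun X hXs hXpd => ?_⟩
  have hT's : (fromBlocks X 0 0 Θ.toBlocks₂₂).IsSymm := by
    unfold Matrix.IsSymm
    rw [Matrix.fromBlocks_transpose]
    simp only [Matrix.transpose_zero]
    rw [hXs.eq, hDs.eq]
  have hT'pd : (fromBlocks X 0 0 Θ.toBlocks₂₂).PosDef := posDef_fromBlocks_diag hXpd hD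
  have h1 : glassoObj S lam (fromBlocks X 0 0 Θ.toBlocks₂₂) ≤ glassoObj S lam Θ :=
    hopt _ hT's hT'pd
  have h2 : glassoObj S lam Θ ≤ glassoObj S lam (fromBlocks Θ.toBlocks₁₁ 0 0 Θ.toBlocks₂₂) :=
    comparison S lam hsmall hsym hpd
  rw [obj_fromBlocks S lam X Θ.toBlocks₂₂ hXpd.det_pos hD.det_pos] at h1
  rw [obj_fromBlocks S lam Θ.toBlocks₁₁ Θ.toBlocks₂₂ hA.det_pos hD.det_pos] at h2
  linarith

lemma sum_sum_equiv (e : m ≃ n) (f : n → n → ℝ) :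
    ∑ a : m, ∑ b : m, f (e a) (e b) = ∑ a : n, ∑ b : n, f a b := by
  rw [← Equiv.sum_comp e (fun a => ∑ b : n, f a b)]
  exact Finset.sum_congr rfl fun a _ => Equiv.sum_comp e (f (e a))

lemma glassoObj_submatrix (e : m ≃ n) (S : Matrix n n ℝ) (lam : ℝ) (Θ : Matrix n n ℝ) :
    glassoObj (S.submatrix e e) lam (Θ.submatrix e e) = glassoObj S lam Θ := by
  rw [obj_eq, obj_eq, Matrix.det_submatrix_equiv_self]
  congr 1
  rw [← sum_sum_equiv e (fun a b => S a b * Θ b a + lam * if a ≠ b then |Θ a b| else 0)]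
  refine Finset.sum_congr rfl fun a _ => Finset.sum_congr rfl fun b _ => ?_
  simp only [Matrix.submatrix_apply]
  congr 1
  congr 1
  simp [eq_iff_iff]

lemma posDef_submatrix_equiv (e : m ≃ n) {M : Matrix n n ℝ} (hM : M.PosDef) :
    (M.submatrix e e).PosDef := by
  rw [posDef_iff_dotProduct_mulVec]
  constructor
  · exact (Matrix.isHermitian_submatrix_equiv e).2 hM.1
  · intro x hx
    have hx' : (x ∘ e.symm : n → ℝ) ≠ 0 := by
      intro h
      apply hx
      ext i
      simpa using congrFun h (e i)
    have hpos := (posDef_iff_dotProduct_mulVec.mp hM).2 hx'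
    have hdot : dotProduct (star x) ((M.submatrix e e) *ᵥ x) =
        dotProduct (star (x ∘ e.symm)) (M *ᵥ (x ∘ e.symm)) := by
      rw [Matrix.submatrix_mulVec_equiv]
      refine Fintype.sum_equiv e _ _ fun i => ?_
      simp [Function.comp]
    rw [hdot]
    exact hpos

lemma isGlassoSolution_submatrix (e : m ≃ n) {S Θ : Matrix n n ℝ} {lam : ℝ}
    (h : IsGlassoSolution S lam Θ) :
    IsGlassoSolution (S.submatrix e e) lam (Θ.submatrix e e) := by
  obtain ⟨hs, hpd, hopt⟩ := h
  refine ⟨hs.submatrix e, posDef_submatrix_equiv e hpd, fun X hXs hXpd => ?_⟩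
  have hX's : (X.submatrix e.symm e.symm).IsSymm := hXs.submatrix _
  have hX'pd : (X.submatrix e.symm e.symm).PosDef := posDef_submatrix_equiv e.symm hXpd
  have hle := hopt _ hX's hX'pd
  have hXe : (X.submatrix (e.symm : n → m) (e.symm : n → m)).submatrix (e : m → n) (e : m → n)
      = X := by
    ext i j
    simp
  calc glassoObj (S.submatrix e e) lam X
      = glassoObj S lam (X.submatrix e.symm e.symm) := by
        conv_lhs => rw [← hXe]
        exact glassoObj_submatrix e S lam (X.submatrix e.symm e.symm)
    _ ≤ glassoObj S lam Θ := hle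
    _ = glassoObj (S.submatrix e e) lam (Θ.submatrix e e) :=
        (glassoObj_submatrix e S lam Θ).symm

end GlassoAux

/-- if all between-cluster entries of S are ≤ λ in absolute value, then the
principal submatrix of a graphical lasso solution indexed by each cluster c⁻¹(k) is itself a
graphical lasso solution, with the same tuning parameter λ, for the corresponding principal
submatrix of S. -/
theorem glasso_principal_submatrix_is_glasso_solution
    {p K : ℕ} (hp : 1 ≤ p)
    (S : Matrix (Fin p) (Fin p) ℝ) (hSsymm : S.IsSymm) (hSpsd : S.PosSemidef)
    (lam : ℝ) (hlam : 0 < lam)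
    (c : Fin p → Fin K) (hc : Function.Surjective c)
    (hsmall : ∀ j j' : Fin p, c j ≠ c j' → |S j j'| ≤ lam)
    (Θhat : Matrix (Fin p) (Fin p) ℝ) (hΘhat : IsGlassoSolution S lam Θhat)
    (k : Fin K) :
    IsGlassoSolution
      (S.submatrix (Subtype.val : {j : Fin p // c j = k} → Fin p) Subtype.val)
      lam
      (Θhat.submatrix (Subtype.val : {j : Fin p // c j = k} → Fin p) Subtype.val) := by
  classical
  set e : {j : Fin p // c j = k} ⊕ {j : Fin p // ¬ c j = k} ≃ Fin p :=
    Equiv.sumCompl (fun j => c j = k) with he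
  have hsol : IsGlassoSolution (S.submatrix e e) lam (Θhat.submatrix e e) :=
    GlassoAux.isGlassoSolution_submatrix e hΘhat
  have hsmall' : ∀ (i : {j : Fin p // c j = k}) (j : {j : Fin p // ¬ c j = k}),
      |(S.submatrix e e) (Sum.inl i) (Sum.inr j)| ≤ lam ∧
      |(S.submatrix e e) (Sum.inr j) (Sum.inl i)| ≤ lam := by
    intro i j
    have hij : c i.1 ≠ c j.1 := by
      rw [i.2]
      exact fun h => j.2 h.symm
    constructor
    · simpa [he] using hsmall i.1 j.1 hij
    · simpa [he] using hsmall j.1 i.1 hij.symm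
  have hkey := GlassoAux.key (S.submatrix e e) lam hsmall' hsol
  have hS : (S.submatrix (e : _ → Fin p) (e : _ → Fin p)).toBlocks₁₁ =
      S.submatrix (Subtype.val : {j : Fin p // c j = k} → Fin p) Subtype.val := by
    ext i j
    simp [Matrix.toBlocks₁₁, he]
  have hΘ : (Θhat.submatrix (e : _ → Fin p) (e : _ → Fin p)).toBlocks₁₁ =
      Θhat.submatrix (Subtype.val : {j : Fin p // c j = k} → Fin p) Subtype.val := by
    ext i j
    simp [Matrix.toBlocks₁₁, he]
  rwa [hS, hΘ] at hkey
end

section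
/- Let p ≥ 1, let S be a p×p real symmetric positive semidefinite matrix, let λ > 0, let c : {1,…,p} → {1,…,K} be a partition of the indices, and let Θ̂ be a graphical lasso solution for S with tuning parameter λ. If Θ̂_{j j'} = 0 for all pairs j, j' with c(j) ≠ c(j') (i.e., Θ̂ is block diagonal with respect to c), then |S_{j j'}| ≤ λ for all pairs j, j' with c(j) ≠ c(j'). -/
open Matrix BigOperators

namespace GlassoAux

lemma isHermitian_of_isSymm' {p : ℕ} {A : Matrix (Fin p) (Fin p) ℝ} (h : A.IsSymm) :
    A.IsHermitian := by
  rw [Matrix.IsHermitian, conjTranspose_eq_transpose_of_trivial]; exact h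

lemma posdef_add_smul_of_small {p : ℕ} (hp : 1 ≤ p) (A E : Matrix (Fin p) (Fin p) ℝ)
    (hA : A.PosDef) (hE : E.IsSymm) :
    ∃ δ : ℝ, 0 < δ ∧ ∀ t : ℝ, |t| < δ → (A + t • E).PosDef := by
  haveI : Nonempty (Fin p) := ⟨⟨0, hp⟩⟩
  -- continuity of quadratic form
  have hg : Continuous fun x : Fin p → ℝ => x ⬝ᵥ A.mulVec x := by
    simp only [dotProduct, mulVec, dotProduct]; fun_prop
  have hKc : IsCompact (Metric.sphere (0 : Fin p → ℝ) 1) := isCompact_sphere 0 1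
  have hne : (Metric.sphere (0 : Fin p → ℝ) 1).Nonempty := by
    refine ⟨fun _ => 1, ?_⟩
    simp [mem_sphere_iff_norm, pi_norm_const]
  obtain ⟨x₀, hx₀mem, hmin⟩ := hKc.exists_isMinOn hne hg.continuousOn
  have hx₀norm : ‖x₀‖ = 1 := by simpa [mem_sphere_iff_norm] using hx₀mem
  have hx₀ne : x₀ ≠ 0 := fun h => by simp [h] at hx₀norm
  set μ : ℝ := x₀ ⬝ᵥ A.mulVec x₀ with hμ
  have hμpos : 0 < μ := by simpa using hA.dotProduct_mulVec_pos hx₀ne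
  set B : ℝ := ∑ i : Fin p, ∑ k : Fin p, |E i k| with hB
  have hBnn : 0 ≤ B := Finset.sum_nonneg fun i _ => Finset.sum_nonneg fun k _ => abs_nonneg _
  refine ⟨μ / (B + 1), div_pos hμpos (by linarith), fun t ht => ?_⟩
  have hEH : (t • E).IsHermitian := by
    rw [Matrix.IsHermitian, conjTranspose_smul]
    simp only [conjTranspose_eq_transpose_of_trivial, star_trivial]
    rw [hE]
  refine Matrix.PosDef.of_dotProduct_mulVec_pos (hA.1.add hEH) fun x hx => ?_
  -- reduce to the unit sphere
  have hxn : (0:ℝ) < ‖x‖ := norm_pos_iff.mpr hx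
  set u : Fin p → ℝ := ‖x‖⁻¹ • x with hu
  have hun : ‖u‖ = 1 := by
    rw [hu, norm_smul]; simp [abs_of_pos (inv_pos.mpr hxn), inv_mul_cancel₀ hxn.ne']
  have huE : |u ⬝ᵥ E.mulVec u| ≤ B := by
    have hub : ∀ i, |u i| ≤ 1 := fun i => hun ▸ norm_le_pi_norm u i
    calc |u ⬝ᵥ E.mulVec u| = |∑ i, ∑ k, u i * (E i k * u k)| := by
          simp [dotProduct, mulVec, Finset.mul_sum]
      _ ≤ ∑ i, |∑ k, u i * (E i k * u k)| := Finset.abs_sum_le_sum_abs _ _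
      _ ≤ ∑ i, ∑ k, |u i * (E i k * u k)| :=
          Finset.sum_le_sum fun i _ => Finset.abs_sum_le_sum_abs _ _
      _ ≤ B := by
          rw [hB]
          refine Finset.sum_le_sum fun i _ => Finset.sum_le_sum fun k _ => ?_
          rw [abs_mul, abs_mul]
          have h3 : |u i| * |u k| ≤ 1 := by
            nlinarith [hub i, hub k, abs_nonneg (u i), abs_nonneg (u k)]
          nlinarith [abs_nonneg (E i k)]
  have huA : μ ≤ u ⬝ᵥ A.mulVec u := hmin (by simp [mem_sphere_iff_norm, hun])
  have key : 0 < u ⬝ᵥ (A + t • E).mulVec u := by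
    have h1 : u ⬝ᵥ (A + t • E).mulVec u = u ⬝ᵥ A.mulVec u + t * (u ⬝ᵥ E.mulVec u) := by
      simp [Matrix.add_mulVec, Matrix.smul_mulVec, dotProduct_add, dotProduct_smul]
    rw [h1]
    have h2 : |t * (u ⬝ᵥ E.mulVec u)| ≤ |t| * B := by
      rw [abs_mul]; exact mul_le_mul_of_nonneg_left huE (abs_nonneg t)
    have h3 : |t| * B < μ := by
      have : |t| * B ≤ |t| * (B + 1) := by nlinarith [abs_nonneg t]
      have h4 : |t| * (B + 1) < μ := by
        rw [lt_div_iff₀ (by linarith : (0:ℝ) < B + 1)] at ht; linarith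
      linarith
    have := abs_le.mp h2
    linarith
  have hxu : x = ‖x‖ • u := by rw [hu, smul_smul, mul_inv_cancel₀ hxn.ne', one_smul]
  have gen : ∀ (cr : ℝ) (v : Fin p → ℝ) (M : Matrix (Fin p) (Fin p) ℝ),
      (cr • v) ⬝ᵥ M.mulVec (cr • v) = cr^2 * (v ⬝ᵥ M.mulVec v) := by
    intro cr v M
    rw [Matrix.mulVec_smul, smul_dotProduct, dotProduct_smul, smul_eq_mul, smul_eq_mul]; ring
  have hthis := gen ‖x‖ u (A + t • E)
  rw [← hxu] at hthis
  simp only [star_trivial]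
  rw [hthis]
  exact mul_pos (pow_pos hxn 2) key

example : True := trivial

/-- Inverse of a block-diagonal invertible matrix is block diagonal. -/
lemma inv_block_diag {p K : ℕ} (c : Fin p → Fin K) (A : Matrix (Fin p) (Fin p) ℝ)
    (hA : IsUnit A.det) (hblock : ∀ a b : Fin p, c a ≠ c b → A a b = 0) :
    ∀ a b : Fin p, c a ≠ c b → A⁻¹ a b = 0 := by
  classical
  set P : Matrix (Fin p) (Fin p) ℝ := fun a b => if c a = c b then A⁻¹ a b else 0 with hP
  have hmul : A * P = 1 := by
    have hAinv : A * A⁻¹ = 1 := mul_nonsing_inv A hA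
    ext a b
    by_cases hab : c a = c b
    · have : (A * P) a b = (A * A⁻¹) a b := by
        simp only [Matrix.mul_apply]
        refine Finset.sum_congr rfl fun k _ => ?_
        by_cases hk : c k = c b
        · simp [hP, hk]
        · have : A a k = 0 := hblock a k (fun h => hk (h.symm.trans hab))
          simp [hP, hk, this]
      rw [this, hAinv]
    · have h1 : (A * P) a b = 0 := by
        simp only [Matrix.mul_apply]
        refine Finset.sum_eq_zero fun k _ => ?_
        by_cases hk : c k = c b
        · have : A a k = 0 := hblock a k (by rw [hk]; exact hab)
          simp [this]
        · simp [hP, hk]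
      have h2 : a ≠ b := fun h => hab (h ▸ rfl)
      rw [h1]
      simp [Matrix.one_apply, h2]
  have : A⁻¹ = P := inv_eq_right_inv hmul
  intro a b hab
  rw [this]
  simp [hP, hab]

/-- Logarithm lower bound near 1. -/
lemma log_one_add_ge {u : ℝ} (hu : |u| ≤ 1/2) : -(2*|u|) ≤ Real.log (1 + u) := by
  have h1 : (0:ℝ) < 1 + u := by cases abs_cases u with
    | inl h => nlinarith [h.1]
    | inr h => nlinarith [h.1]
  rw [show -(2*|u|) ≤ Real.log (1+u) ↔ Real.exp (-(2*|u|)) ≤ 1+u from (Real.le_log_iff_exp_le h1).symm.symm]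
  have h2 : 1 + 2*|u| ≤ Real.exp (2*|u|) := by linarith [Real.add_one_le_exp (2*|u|)]
  have h3 : (0:ℝ) < 1 + 2*|u| := by positivity
  rw [Real.exp_neg]
  have h5 : (Real.exp (2*|u|))⁻¹ ≤ (1+2*|u|)⁻¹ := by
    apply inv_anti₀ h3 h2
  refine h5.trans ?_
  rw [inv_eq_one_div, div_le_iff₀ h3]
  rcases abs_cases u with ⟨h,_⟩|⟨h,_⟩ <;> nlinarith


lemma poly_bound (Q : Polynomial ℝ) : ∃ C : ℝ, 0 ≤ C ∧ ∀ t : ℝ, |t| ≤ 1 → |Q.eval t| ≤ C := by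
  obtain ⟨C, hC⟩ := (isCompact_Icc (a := (-1:ℝ)) (b := 1)).exists_bound_of_continuousOn
    (Q.continuous.continuousOn)
  exact ⟨max C 0, le_max_right _ _, fun t ht =>
    le_trans (by simpa [Real.norm_eq_abs] using hC t (abs_le.mp ht)) (le_max_left _ _)⟩

section MainProof

variable {p K : ℕ}

set_option maxHeartbeats 2000000 in
theorem main_test
    (hp : 1 ≤ p)
    (S : Matrix (Fin p) (Fin p) ℝ) (hSsymm : S.IsSymm)
    (lam : ℝ) (hlam : 0 < lam)
    (c : Fin p → Fin K)
    (Θhat : Matrix (Fin p) (Fin p) ℝ)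
    (hTs : Θhat.IsSymm) (hTpd : Θhat.PosDef)
    (hmax : ∀ Θ : Matrix (Fin p) (Fin p) ℝ, Θ.IsSymm → Θ.PosDef →
      (Real.log Θ.det - (S * Θ).trace - lam * ∑ a : Fin p, ∑ b : Fin p, (if a ≠ b then |Θ a b| else 0)) ≤
      (Real.log Θhat.det - (S * Θhat).trace - lam * ∑ a : Fin p, ∑ b : Fin p, (if a ≠ b then |Θhat a b| else 0)))
    (hblock : ∀ j j' : Fin p, c j ≠ c j' → Θhat j j' = 0) :
    ∀ j j' : Fin p, c j ≠ c j' → |S j j'| ≤ lam := by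
  intro j j' hjj'
  by_contra hcon
  push_neg at hcon
  have hjne : j ≠ j' := fun h => hjj' (h ▸ rfl)
  have hSne : S j j' ≠ 0 := fun h => by rw [h] at hcon; simp at hcon; linarith
  set s : ℝ := Real.sign (S j j') with hsdef
  have hs : s * S j j' = |S j j'| := by
    rcases lt_or_gt_of_ne hSne with h | h
    · rw [hsdef, Real.sign_of_neg h, abs_of_neg h]; ring
    · rw [hsdef, Real.sign_of_pos h, abs_of_pos h]; ring
  have hsabs : |s| = 1 := by
    rcases lt_or_gt_of_ne hSne with h | h
    · rw [hsdef, Real.sign_of_neg h]; simp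
    · rw [hsdef, Real.sign_of_pos h]; simp
  set E : Matrix (Fin p) (Fin p) ℝ :=
    fun a b => (if a = j ∧ b = j' then -s else 0) + (if a = j' ∧ b = j then -s else 0) with hEdef
  have hEsymm : E.IsSymm := by
    ext a b
    show E b a = E a b
    rw [hEdef]
    dsimp only
    by_cases h1 : b = j ∧ a = j' <;> by_cases h2 : b = j' ∧ a = j <;>
      by_cases h3 : a = j ∧ b = j' <;> by_cases h4 : a = j' ∧ b = j <;>
      simp [h1, h2, h3, h4, hjne, hjne.symm] <;> tauto
  -- positive definiteness for small perturbations
  obtain ⟨δ, hδpos, hpd⟩ := posdef_add_smul_of_small hp Θhat E hTpd hEsymm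
  -- block-diagonal inverse
  have hunit : IsUnit Θhat.det := hTpd.det_pos.ne'.isUnit
  have hinv := inv_block_diag c Θhat hunit hblock
  -- trace of Θhat⁻¹ * E is zero
  have trM : (Θhat⁻¹ * E).trace = 0 := by
    simp only [Matrix.trace, Matrix.diag, Matrix.mul_apply]
    simp only [hEdef]
    refine Finset.sum_eq_zero fun i _ => Finset.sum_eq_zero fun k _ => ?_
    by_cases h1 : k = j ∧ i = j'
    · obtain ⟨hk, hi⟩ := h1
      rw [hk, hi, hinv j' j (Ne.symm hjj')]
      simp
    · by_cases h2 : k = j' ∧ i = j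
      · obtain ⟨hk, hi⟩ := h2
        rw [hk, hi, hinv j j' hjj']
        simp
      · simp [h1, h2]
  -- trace of S * E
  have trSE : (S * E).trace = -(2 * |S j j'|) := by
    have hS' : S j' j = S j j' := by
      have := hSsymm; rw [Matrix.IsSymm] at this
      calc S j' j = Sᵀ j j' := rfl
        _ = S j j' := by rw [this]
    simp only [Matrix.trace, Matrix.diag, Matrix.mul_apply]
    simp only [hEdef]
    rw [show -(2 * |S j j'|) = -(2 * (s * S j j')) from by rw [hs]]
    simp [mul_add, ite_and, mul_ite, Finset.sum_add_distrib, Finset.sum_ite_eq',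
      Finset.sum_ite_eq, hjne, hjne.symm, hS']
    ring
  -- the fixed polynomial in the determinant expansion
  set M : Matrix (Fin p) (Fin p) ℝ := Θhat⁻¹ * E with hMdef
  set Q : Polynomial ℝ :=
    (Matrix.det (1 + (Polynomial.X : Polynomial ℝ) • M.map Polynomial.C)).divX.divX with hQdef
  obtain ⟨C, hC0, hCb⟩ := poly_bound Q
  set ε : ℝ := |S j j'| - lam with hεdef
  have hεpos : 0 < ε := by rw [hεdef]; linarith
  -- choose t
  set t : ℝ := min (δ/2) (min 1 (min (ε/(2*C+2)) (1/(2*C+2)))) with htdef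
  have hden : (0:ℝ) < 2*C+2 := by linarith
  have htpos : 0 < t := by
    rw [htdef]
    refine lt_min (by linarith) (lt_min one_pos (lt_min ?_ ?_))
    · exact div_pos hεpos hden
    · exact div_pos one_pos hden
  have ht1 : t ≤ 1 := le_trans (min_le_right _ _) (min_le_left _ _)
  have htδ : |t| < δ := by
    rw [abs_of_pos htpos]
    exact lt_of_le_of_lt (min_le_left _ _) (by linarith)
  have htε : t ≤ ε/(2*C+2) := le_trans (min_le_right _ _) (le_trans (min_le_right _ _) (min_le_left _ _))
  have htC : t ≤ 1/(2*C+2) := le_trans (min_le_right _ _) (le_trans (min_le_right _ _) (min_le_right _ _))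
  -- the perturbed matrix
  set Θt : Matrix (Fin p) (Fin p) ℝ := Θhat + t • E with hΘtdef
  have hΘtpd : Θt.PosDef := hpd t htδ
  have hΘtsymm : Θt.IsSymm := by
    rw [Matrix.IsSymm] at *
    rw [hΘtdef, Matrix.transpose_add, Matrix.transpose_smul, hTs, hEsymm]
  -- determinant expansion
  have hfact : Θt = Θhat * (1 + t • M) := by
    rw [hΘtdef, hMdef, Matrix.mul_add, mul_one, Matrix.mul_smul, ← Matrix.mul_assoc,
      mul_nonsing_inv Θhat hunit, Matrix.one_mul]
  set u : ℝ := Q.eval t * t ^ 2 with hudef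
  have hdet1 : (1 + t • M).det = 1 + u := by
    rw [Matrix.det_one_add_smul t M, trM, hudef, hQdef]; ring
  have hQ1 : |Q.eval t| ≤ C := hCb t (by rw [abs_of_pos htpos]; exact ht1)
  have hQt : |u| ≤ C * t^2 := by
    rw [hudef, abs_mul, abs_pow, abs_of_pos htpos]
    exact mul_le_mul_of_nonneg_right hQ1 (sq_nonneg t)
  have hu2 : |u| ≤ 1/2 := by
    have h2 : t*t ≤ t*(1/(2*C+2)) := mul_le_mul_of_nonneg_left htC htpos.le
    have h5 : t*(1/(2*C+2)) ≤ 1*(1/(2*C+2)) := mul_le_mul_of_nonneg_right ht1 (by positivity)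
    have h6 : C * (1/(2*C+2)) ≤ 1/2 := by
      rw [mul_one_div, div_le_div_iff₀ hden two_pos]; linarith
    have h8 : C*t^2 ≤ C*(1/(2*C+2)) :=
      mul_le_mul_of_nonneg_left (by nlinarith) hC0
    linarith
  have hupos : (0:ℝ) < 1 + u := by
    have := abs_le.mp hu2; linarith [this.1]
  have hlog : -(2*|u|) ≤ Real.log (1+u) := log_one_add_ge hu2
  have h2u : 2*|u| ≤ t*ε := by
    have htε' : t*(2*C+2) ≤ ε := by rwa [le_div_iff₀ hden] at htε
    have h9 : t*(t*(2*C+2)) ≤ t*ε := mul_le_mul_of_nonneg_left htε' htpos.le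
    nlinarith [hQt, htpos, hC0, sq_nonneg t]
  -- objective computations
  have htrace : (S * Θt).trace = (S * Θhat).trace - t * (2*|S j j'|) := by
    rw [hΘtdef, Matrix.mul_add, Matrix.trace_add, Matrix.mul_smul, Matrix.trace_smul, trSE,
      smul_eq_mul]
    ring
  have hlogdet : Real.log Θt.det = Real.log Θhat.det + Real.log (1+u) := by
    rw [hfact, Matrix.det_mul, hdet1, Real.log_mul hTpd.det_pos.ne' hupos.ne']
  -- penalty
  have key : ∀ a b : Fin p, (if a ≠ b then |Θt a b| else 0)
      = (if a ≠ b then |Θhat a b| else 0)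
        + ((if a = j ∧ b = j' then t else 0) + (if a = j' ∧ b = j then t else 0)) := by
    intro a b
    by_cases h1 : a = j ∧ b = j'
    · obtain ⟨ha, hb⟩ := h1
      subst ha; subst hb
      have hE : E a b = -s := by rw [hEdef]; simp [hjne, hjne.symm]
      have h0 : Θhat a b = 0 := hblock a b hjj'
      simp only [hΘtdef, Matrix.add_apply, Matrix.smul_apply, hE, h0, smul_eq_mul]
      simp [hjne, hjne.symm, abs_mul, hsabs, abs_of_pos htpos]
    · by_cases h2 : a = j' ∧ b = j
      · obtain ⟨ha, hb⟩ := h2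
        subst ha; subst hb
        have hE : E a b = -s := by rw [hEdef]; simp [hjne, hjne.symm]
        have h0 : Θhat a b = 0 := hblock a b (Ne.symm hjj')
        simp only [hΘtdef, Matrix.add_apply, Matrix.smul_apply, hE, h0, smul_eq_mul]
        simp [hjne, hjne.symm, abs_mul, hsabs, abs_of_pos htpos]
      · have hE0 : E a b = 0 := by rw [hEdef]; simp [h1, h2]
        simp [hΘtdef, hE0, h1, h2]
  have hpen : (∑ a : Fin p, ∑ b : Fin p, (if a ≠ b then |Θt a b| else 0))
      = (∑ a : Fin p, ∑ b : Fin p, (if a ≠ b then |Θhat a b| else 0)) + 2*t := by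
    simp only [key, Finset.sum_add_distrib]
    have e1 : (∑ a : Fin p, ∑ b : Fin p, (if a = j ∧ b = j' then t else 0)) = t := by
      simp [ite_and, Finset.sum_ite_eq, Finset.sum_ite_eq']
    have e2 : (∑ a : Fin p, ∑ b : Fin p, (if a = j' ∧ b = j then t else 0)) = t := by
      simp [ite_and, Finset.sum_ite_eq, Finset.sum_ite_eq']
    rw [e1, e2]; ring
  -- final contradiction
  have hobj := hmax Θt hΘtsymm hΘtpd
  rw [hlogdet, htrace, hpen] at hobj
  rw [hεdef] at h2u
  nlinarith [hlog, h2u, hobj, mul_pos htpos hεpos, hεdef]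


end MainProof

end GlassoAux

/-- if a graphical lasso solution is block diagonal with respect to a partition c,
then all between-cluster entries of S are at most λ in absolute value. -/
theorem between_cluster_entries_small_of_glasso_block_diagonal
    {p K : ℕ} (hp : 1 ≤ p)
    (S : Matrix (Fin p) (Fin p) ℝ) (hSsymm : S.IsSymm) (hSpsd : S.PosSemidef)
    (lam : ℝ) (hlam : 0 < lam)
    (c : Fin p → Fin K) (hc : Function.Surjective c)
    (Θhat : Matrix (Fin p) (Fin p) ℝ) (hΘhat : IsGlassoSolution S lam Θhat)
    (hblock : ∀ j j' : Fin p, c j ≠ c j' → Θhat j j' = 0) :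
    ∀ j j' : Fin p, c j ≠ c j' → |S j j'| ≤ lam := by
  obtain ⟨hTs, hTpd, hmax⟩ := hΘhat
  exact GlassoAux.main_test hp S hSsymm lam hlam c Θhat hTs hTpd
    (fun Θ h1 h2 => by simpa [glassoObj] using hmax Θ h1 h2) hblock
end

section
/- Let p ≥ 1, let S be a p×p real symmetric positive semidefinite matrix, let λ > 0, and let Θ̂ be a graphical lasso solution for S with tuning parameter λ. If j ≠ j' are indices with |S_{j j'}| > λ, then j and j' lie in the same connected component of the estimated graph of Θ̂. -/
open Matrix BigOperators

/-- The estimated graph of Θ̂: edge between distinct j, j' iff Θ̂_{jj'} ≠ 0. -/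
def estimatedGraph {n : Type*} (Θ : Matrix n n ℝ) : SimpleGraph n :=
  SimpleGraph.fromRel (fun j j' => Θ j j' ≠ 0)

/- ----------------- auxiliary lemmas ----------------- -/

lemma glasso_entry_zero_of_not_reachable {n : Type*} (Θ : Matrix n n ℝ) {a b : n}
    (h : ¬ (estimatedGraph Θ).Reachable a b) : Θ a b = 0 := by
  by_contra hne0
  have hab : a ≠ b := by rintro rfl; exact h (SimpleGraph.Reachable.refl a)
  exact h (SimpleGraph.Adj.reachable
    (by simp only [estimatedGraph, SimpleGraph.fromRel_adj]
        exact ⟨hab, Or.inl hne0⟩))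

lemma glasso_inv_entry_zero_of_not_reachable {p : ℕ} (Θ : Matrix (Fin p) (Fin p) ℝ)
    (hpd : Θ.PosDef) {a b : Fin p} (h : ¬ (estimatedGraph Θ).Reachable a b) :
    Θ⁻¹ a b = 0 := by
  classical
  have hdet : IsUnit Θ.det := isUnit_iff_ne_zero.2 hpd.det_pos.ne'
  set R : Fin p → Fin p → Prop := fun a b => (estimatedGraph Θ).Reachable a b with hR
  have hzero : ∀ x y, ¬ R x y → Θ x y = 0 := fun x y hxy =>
    glasso_entry_zero_of_not_reachable Θ hxy
  set N : Matrix (Fin p) (Fin p) ℝ := Matrix.of fun x y => if R x y then Θ⁻¹ x y else 0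
    with hNdef
  have hN : Θ * N = 1 := by
    ext x z
    rw [Matrix.mul_apply]
    by_cases hxz : R x z
    · have h1 : ∀ y, Θ x y * N y z = Θ x y * Θ⁻¹ y z := by
        intro y
        by_cases hxy : R x y
        · have hyz : R y z := hxy.symm.trans hxz
          simp only [hNdef, Matrix.of_apply, if_pos hyz]
        · simp [hzero x y hxy]
      rw [Finset.sum_congr rfl (fun y _ => h1 y), ← Matrix.mul_apply,
        Matrix.mul_nonsing_inv Θ hdet]
    · have h1 : ∀ y, Θ x y * N y z = 0 := by
        intro y
        by_cases hxy : R x y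
        · have hyz : ¬ R y z := fun hh => hxz (hxy.trans hh)
          simp only [hNdef, Matrix.of_apply, if_neg hyz, mul_zero]
        · simp [hzero x y hxy]
      rw [Finset.sum_congr rfl (fun y _ => h1 y)]
      have hxzne : x ≠ z := by rintro rfl; exact hxz (SimpleGraph.Reachable.refl x)
      simp [Matrix.one_apply_ne hxzne]
  have hinv : Θ⁻¹ = N := Matrix.inv_eq_right_inv hN
  rw [hinv, hNdef]
  simp only [Matrix.of_apply]
  exact if_neg h

lemma glasso_posdef_quad_bound {p : ℕ} (hp : 1 ≤ p) (M : Matrix (Fin p) (Fin p) ℝ)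
    (hM : M.PosDef) :
    ∃ ε : ℝ, 0 < ε ∧ ∀ x : Fin p → ℝ, ε * ‖x‖ ^ 2 ≤ x ⬝ᵥ M.mulVec x := by
  have : Nonempty (Fin p) := ⟨⟨0, hp⟩⟩
  have hcont : Continuous fun x : Fin p → ℝ => x ⬝ᵥ M.mulVec x := by
    simp only [dotProduct, Matrix.mulVec]
    fun_prop
  have hsph : IsCompact (Metric.sphere (0 : Fin p → ℝ) 1) := isCompact_sphere 0 1
  have hne : (Metric.sphere (0 : Fin p → ℝ) 1).Nonempty := by
    rw [NormedSpace.sphere_nonempty]; norm_num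
  obtain ⟨u, hu, hmin⟩ := hsph.exists_isMinOn hne hcont.continuousOn
  have hu1 : ‖u‖ = 1 := by simpa using hu
  have hu0 : u ≠ 0 := by intro h; rw [h] at hu1; simp at hu1
  refine ⟨u ⬝ᵥ M.mulVec u, by simpa using hM.dotProduct_mulVec_pos hu0, fun x => ?_⟩
  rcases eq_or_ne x 0 with rfl | hx
  · simp
  · have hc : (0:ℝ) < ‖x‖ := norm_pos_iff.2 hx
    set v : Fin p → ℝ := ‖x‖⁻¹ • x with hv
    have hv1 : v ∈ Metric.sphere (0 : Fin p → ℝ) 1 := by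
      simp [hv, norm_smul, abs_of_pos (inv_pos.2 hc), inv_mul_cancel₀ hc.ne']
    have hxv : x = ‖x‖ • v := by
      rw [hv, smul_smul, mul_inv_cancel₀ hc.ne', one_smul]
    have hle : u ⬝ᵥ M.mulVec u ≤ v ⬝ᵥ M.mulVec v := hmin hv1
    have hval : x ⬝ᵥ M.mulVec x = (v ⬝ᵥ M.mulVec v) * ‖x‖ ^ 2 := by
      conv_lhs => rw [hxv]
      rw [Matrix.mulVec_smul, smul_dotProduct, dotProduct_smul,
        smul_eq_mul, smul_eq_mul]
      ring
    rw [hval]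
    nlinarith [sq_nonneg ‖x‖]

lemma glasso_trace_mul_std {p : ℕ} (M : Matrix (Fin p) (Fin p) ℝ) (i k : Fin p) :
    (M * Matrix.single i k (1:ℝ)).trace = M k i := by
  classical
  simp [Matrix.trace, Matrix.diag, Matrix.mul_apply, Matrix.single,
    mul_ite, ite_and, Finset.sum_ite_eq, Finset.sum_ite_eq']

lemma glasso_quad_std {p : ℕ} (i k : Fin p) (x : Fin p → ℝ) :
    x ⬝ᵥ (Matrix.single i k (1:ℝ)).mulVec x = x i * x k := by
  classical
  simp [dotProduct, Matrix.mulVec, Matrix.single,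
    mul_ite, ite_and, Finset.sum_ite_eq, Finset.sum_ite_eq', Finset.mul_sum]

lemma glasso_log_one_sub_ge {x : ℝ} (h0 : 0 ≤ x) (h2 : x ≤ 1/2) :
    -(2*x) ≤ Real.log (1-x) := by
  have h1 : (0:ℝ) < 1 - x := by linarith
  have h3 : 1 + 2*x ≤ Real.exp (2*x) := by
    have := Real.add_one_le_exp (2*x); linarith
  have h4 : Real.exp (-(2*x)) ≤ 1 - x := by
    rw [Real.exp_neg, inv_eq_one_div, div_le_iff₀ (Real.exp_pos _)]
    nlinarith
  calc -(2*x) = Real.log (Real.exp (-(2*x))) := (Real.log_exp _).symm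
    _ ≤ Real.log (1-x) := Real.log_le_log (Real.exp_pos _) h4

lemma glasso_std_transpose {p : ℕ} (i k : Fin p) :
    (Matrix.single i k (1:ℝ))ᵀ = Matrix.single k i 1 := by
  ext a b
  simp [Matrix.transpose_apply, Matrix.single, and_comm]

set_option maxHeartbeats 1000000 in
/-- if |S_{jj'}| > λ for distinct j, j', then j and j' lie in the same connected
component of the estimated graph of any graphical lasso solution. -/
theorem glasso_reachable_of_large_entry
    {p : ℕ} (hp : 1 ≤ p)
    (S : Matrix (Fin p) (Fin p) ℝ) (hSsymm : S.IsSymm) (hSpsd : S.PosSemidef)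
    (lam : ℝ) (hlam : 0 < lam)
    (Θhat : Matrix (Fin p) (Fin p) ℝ) (hΘhat : IsGlassoSolution S lam Θhat)
    (j j' : Fin p) (hne : j ≠ j') (hlarge : lam < |S j j'|) :
    (estimatedGraph Θhat).Reachable j j' := by
  classical
  obtain ⟨hsymm, hpd, hopt⟩ := hΘhat
  by_contra hreach
  have hSconst : S j' j = S j j' := by
    have h := congrFun (congrFun hSsymm j) j'
    simpa using h
  have hΘ0 : Θhat j j' = 0 := glasso_entry_zero_of_not_reachable Θhat hreach
  have hΘ0' : Θhat j' j = 0 :=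
    glasso_entry_zero_of_not_reachable Θhat (fun h => hreach h.symm)
  have hinv0 : Θhat⁻¹ j j' = 0 := glasso_inv_entry_zero_of_not_reachable Θhat hpd hreach
  have hinv0' : Θhat⁻¹ j' j = 0 :=
    glasso_inv_entry_zero_of_not_reachable Θhat hpd (fun h => hreach h.symm)
  set s : ℝ := if 0 < S j j' then -1 else 1 with hs
  have hs1 : |s| = 1 := by rw [hs]; split_ifs <;> simp
  have hs2 : s * S j j' = -|S j j'| := by
    rw [hs]; split_ifs with h
    · rw [abs_of_pos h]; ring
    · rw [abs_of_nonpos (not_lt.1 h)]; ring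
  set A : Matrix (Fin p) (Fin p) ℝ :=
    s • (Matrix.single j j' (1:ℝ) + Matrix.single j' j 1) with hA
  have hAsymm : Aᵀ = A := by
    rw [hA, Matrix.transpose_smul, Matrix.transpose_add, glasso_std_transpose,
      glasso_std_transpose, add_comm]
  have hquadA : ∀ x : Fin p → ℝ, |x ⬝ᵥ A.mulVec x| ≤ 2 * ‖x‖^2 := by
    intro x
    have hval : x ⬝ᵥ A.mulVec x = s * (x j * x j' + x j' * x j) := by
      rw [hA, Matrix.smul_mulVec, dotProduct_smul, Matrix.add_mulVec,
        dotProduct_add, glasso_quad_std, glasso_quad_std, smul_eq_mul]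
    rw [hval, abs_mul, hs1, one_mul]
    have hj : |x j| ≤ ‖x‖ := norm_le_pi_norm x j
    have hj' : |x j'| ≤ ‖x‖ := norm_le_pi_norm x j'
    have h5 : x j * x j' + x j' * x j = 2 * (x j * x j') := by ring
    rw [h5, abs_mul, abs_mul, abs_two]
    nlinarith [abs_nonneg (x j), abs_nonneg (x j'), norm_nonneg x]
  obtain ⟨ε, hε, hquad⟩ := glasso_posdef_quad_bound hp Θhat hpd
  have hposdef : ∀ t : ℝ, 0 ≤ t → t < ε/2 → (Θhat + t • A).PosDef := by
    intro t ht htε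
    rw [Matrix.posDef_iff_dotProduct_mulVec]
    constructor
    · rw [Matrix.IsHermitian, Matrix.conjTranspose_eq_transpose_of_trivial,
        Matrix.transpose_add, Matrix.transpose_smul, hAsymm, hsymm]
    · intro x hx
      have h1 := hquad x
      have h2 := abs_le.1 (hquadA x)
      have hxn : 0 < ‖x‖ := norm_pos_iff.2 hx
      have hx2 : 0 < ‖x‖^2 := by positivity
      simp only [star_trivial]
      rw [Matrix.add_mulVec, dotProduct_add, Matrix.smul_mulVec,
        dotProduct_smul, smul_eq_mul]
      nlinarith [mul_le_mul_of_nonneg_left h2.1 ht]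
  set B : Matrix (Fin p) (Fin p) ℝ := Θhat⁻¹ * A with hB
  have hdetΘ : 0 < Θhat.det := hpd.det_pos
  have hdetunit : IsUnit Θhat.det := isUnit_iff_ne_zero.2 hdetΘ.ne'
  have hfact : ∀ t : ℝ, Θhat + t • A = Θhat * (1 + t • B) := by
    intro t
    rw [hB, Matrix.mul_add, Matrix.mul_one, Matrix.mul_smul, ← Matrix.mul_assoc,
      Matrix.mul_nonsing_inv Θhat hdetunit, Matrix.one_mul]
  have htrB : B.trace = 0 := by
    rw [hB, hA, Matrix.mul_smul, Matrix.trace_smul, Matrix.mul_add, Matrix.trace_add,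
      glasso_trace_mul_std, glasso_trace_mul_std, hinv0, hinv0']
    simp
  set q : Polynomial ℝ :=
    (Matrix.det (1 + (Polynomial.X : Polynomial ℝ) • B.map Polynomial.C)).divX.divX with hq
  have hdet1 : ∀ t : ℝ, (1 + t • B).det = 1 + q.eval t * t^2 := by
    intro t
    rw [Matrix.det_one_add_smul t B, htrB]
    ring
  obtain ⟨Q, hQ⟩ := (isCompact_Icc (a := (0:ℝ)) (b := 1)).exists_bound_of_continuousOn
    (q.continuous).continuousOn
  set QQ : ℝ := max Q 0 with hQQ
  have hQQ0 : 0 ≤ QQ := le_max_right _ _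
  have hQQ1 : (0:ℝ) < QQ + 1 := by positivity
  set c : ℝ := |S j j'| - lam with hc
  have hcpos : 0 < c := by rw [hc]; linarith
  set t : ℝ := min (ε/4) (min 1 (min (c/(2*(QQ+1))) (1/(2*(QQ+1))))) with ht
  have htpos : 0 < t := by
    refine lt_min (by positivity) (lt_min one_pos (lt_min (by positivity) (by positivity)))
  have ht1 : t ≤ 1 := le_trans (min_le_right _ _) (min_le_left _ _)
  have htε : t < ε/2 := lt_of_le_of_lt (min_le_left _ _) (by linarith)
  have htc : (QQ+1) * t ≤ c/2 := by
    have h : t ≤ c/(2*(QQ+1)) :=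
      (min_le_right _ _).trans ((min_le_right _ _).trans (min_le_left _ _))
    rw [le_div_iff₀ (by positivity : (0:ℝ) < 2*(QQ+1))] at h
    linarith
  have hthalf : (QQ+1) * t ≤ 1/2 := by
    have h : t ≤ 1/(2*(QQ+1)) :=
      (min_le_right _ _).trans ((min_le_right _ _).trans (min_le_right _ _))
    rw [le_div_iff₀ (by positivity : (0:ℝ) < 2*(QQ+1))] at h
    linarith
  set Θt : Matrix (Fin p) (Fin p) ℝ := Θhat + t • A with hΘt
  have hΘtpd : Θt.PosDef := hposdef t htpos.le htε
  have hΘtsymm : Θt.IsSymm := by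
    rw [Matrix.IsSymm, hΘt, Matrix.transpose_add, Matrix.transpose_smul, hAsymm, hsymm]
  have hopt' := hopt Θt hΘtsymm hΘtpd
  have hdetΘt : Θt.det = Θhat.det * (1 + q.eval t * t^2) := by
    rw [hΘt, hfact t, Matrix.det_mul, hdet1 t]
  have hdpos : 0 < 1 + q.eval t * t^2 := by
    have h := hΘtpd.det_pos
    rw [hdetΘt] at h
    nlinarith
  have hlog : Real.log Θt.det = Real.log Θhat.det + Real.log (1 + q.eval t * t^2) := by
    rw [hdetΘt, Real.log_mul hdetΘ.ne' hdpos.ne']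
  have htrSA : (S * A).trace = -(2 * |S j j'|) := by
    rw [hA, Matrix.mul_smul, Matrix.trace_smul, Matrix.mul_add, Matrix.trace_add,
      glasso_trace_mul_std, glasso_trace_mul_std, hSconst, smul_eq_mul]
    calc s * (S j j' + S j j') = 2 * (s * S j j') := by ring
      _ = -(2 * |S j j'|) := by rw [hs2]; ring
  have htr : (S * Θt).trace = (S * Θhat).trace - 2 * t * |S j j'| := by
    rw [hΘt, Matrix.mul_add, Matrix.trace_add, Matrix.mul_smul, Matrix.trace_smul,
      smul_eq_mul, htrSA]
    ring
  have hentry : ∀ a b : Fin p, (if a ≠ b then |Θt a b| else 0)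
      = (if a ≠ b then |Θhat a b| else 0)
        + ((if a = j ∧ b = j' then t else 0) + (if a = j' ∧ b = j then t else 0)) := by
    intro a b
    by_cases h1 : a = j ∧ b = j'
    · obtain ⟨rfl, rfl⟩ := h1
      have hAv : A a b = s := by
        rw [hA]
        simp [Matrix.single, hne, Ne.symm hne]
      have hv : Θt a b = t * s := by
        rw [hΘt]
        simp [Matrix.add_apply, Matrix.smul_apply, hAv, hΘ0]
      rw [hv]
      have : |t * s| = t := by rw [abs_mul, hs1, mul_one, abs_of_pos htpos]
      simp [hne, Ne.symm hne, this, hΘ0]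
    · by_cases h2 : a = j' ∧ b = j
      · obtain ⟨rfl, rfl⟩ := h2
        have hAv : A a b = s := by
          rw [hA]
          simp [Matrix.single, hne, Ne.symm hne]
        have hv : Θt a b = t * s := by
          rw [hΘt]
          simp [Matrix.add_apply, Matrix.smul_apply, hAv, hΘ0']
        rw [hv]
        have : |t * s| = t := by rw [abs_mul, hs1, mul_one, abs_of_pos htpos]
        simp [hne, Ne.symm hne, this, hΘ0', h1]
      · have hv : Θt a b = Θhat a b := by
          have hA0 : A a b = 0 := by
            rw [hA]
            simp only [Matrix.smul_apply, Matrix.add_apply, Matrix.single,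
              Matrix.of_apply, smul_eq_mul]
            have e1 : ¬(j = a ∧ j' = b) := fun ⟨u, v⟩ => h1 ⟨u.symm, v.symm⟩
            have e2 : ¬(j' = a ∧ j = b) := fun ⟨u, v⟩ => h2 ⟨u.symm, v.symm⟩
            rw [if_neg e1, if_neg e2]
            ring
          rw [hΘt]
          simp [Matrix.add_apply, Matrix.smul_apply, hA0]
        rw [hv, if_neg h1, if_neg h2]
        ring
  have hpen : (∑ a : Fin p, ∑ b : Fin p, (if a ≠ b then |Θt a b| else 0))
      = (∑ a : Fin p, ∑ b : Fin p, (if a ≠ b then |Θhat a b| else 0)) + 2*t := by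
    rw [Finset.sum_congr rfl (fun a _ => Finset.sum_congr rfl (fun b _ => hentry a b))]
    simp only [Finset.sum_add_distrib]
    have e1 : (∑ a : Fin p, ∑ b : Fin p, (if a = j ∧ b = j' then t else 0)) = t := by
      simp [ite_and, Finset.sum_ite_eq, Finset.sum_ite_eq']
    have e2 : (∑ a : Fin p, ∑ b : Fin p, (if a = j' ∧ b = j then t else 0)) = t := by
      simp [ite_and, Finset.sum_ite_eq, Finset.sum_ite_eq']
    rw [e1, e2]
    ring
  have hobj : glassoObj S lam Θt
      = glassoObj S lam Θhat + Real.log (1 + q.eval t * t^2) + 2*t*|S j j'| - 2*lam*t := by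
    simp only [glassoObj]
    rw [hlog, htr, hpen]
    ring
  have hkey : Real.log (1 + q.eval t * t^2) ≤ -(2*t*c) := by
    rw [hobj] at hopt'
    rw [hc]
    linarith
  have hqb : |q.eval t| ≤ QQ := by
    have h := hQ t ⟨htpos.le, ht1⟩
    rw [Real.norm_eq_abs] at h
    exact le_trans h (le_max_left _ _)
  have hlowval : 1 - (QQ+1)*t*t ≤ 1 + q.eval t * t^2 := by
    have h := (abs_le.1 hqb).1
    nlinarith [sq_nonneg t]
  have hx0 : 0 ≤ (QQ+1)*t*t := by positivity
  have hxhalf : (QQ+1)*t*t ≤ 1/2 := by nlinarith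
  have hlog1 : -(2*((QQ+1)*t*t)) ≤ Real.log (1 - (QQ+1)*t*t) :=
    glasso_log_one_sub_ge hx0 hxhalf
  have hlog2 : Real.log (1 - (QQ+1)*t*t) ≤ Real.log (1 + q.eval t * t^2) :=
    Real.log_le_log (by linarith) hlowval
  nlinarith [htc, htpos, hcpos]
end

section
/- Let p ≥ 1, let S be a p×p real symmetric positive semidefinite matrix, let λ > 0, and let Θ̂ be a graphical lasso solution for S with tuning parameter λ. If the threshold graph of S at level λ is connected, then the estimated graph of Θ̂ is connected; in particular, if λ is strictly below the smallest level at which the threshold graph of S becomes disconnected, then the graphical lasso estimate consists of a single connected component containing all p variables. -/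
open Matrix BigOperators

/-- The threshold graph of S at level λ: edge between distinct j, j' iff |S_{jj'}| > λ. -/
def thresholdGraph {n : Type*} (S : Matrix n n ℝ) (lam : ℝ) : SimpleGraph n :=
  SimpleGraph.fromRel (fun j j' => lam < |S j j'|)

section Helpers

variable {p : ℕ}

private lemma sum_sum_eq_pair {f : Fin p → Fin p → ℝ} {a b : Fin p} (hab : a ≠ b)
    (h : ∀ i j, ¬(i = a ∧ j = b) → ¬(i = b ∧ j = a) → f i j = 0) :
    ∑ i, ∑ j, f i j = f a b + f b a := by
  classical
  rw [← Finset.sum_product', Finset.univ_product_univ]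
  rw [← Finset.sum_subset (Finset.subset_univ ({(a,b),(b,a)} : Finset (Fin p × Fin p)))]
  · rw [Finset.sum_pair (by simp [hab, Prod.ext_iff])]
  · intro x _ hx
    simp only [Finset.mem_insert, Finset.mem_singleton, Prod.ext_iff] at hx
    push_neg at hx
    rcases hx with ⟨h1, h2⟩
    exact h x.1 x.2 (fun hc => h1 hc.1 hc.2) (fun hc => h2 hc.1 hc.2)

private lemma final_contradiction {X M0 t e : ℝ} (hXpos : 0 < X) (hM0 : 0 < M0)
    (ht0 : 0 < t) (he : 0 < e) (hM0t : M0 * t ≤ e / 2) (hte : 2 * t * e ≤ 1)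
    (hkey : Real.log X ≤ -(2 * t * e)) (hXlb : 1 - M0 * t ^ 2 ≤ X) : False := by
  have hloglb : 1 - X⁻¹ ≤ Real.log X := by
    have h1 := Real.log_le_sub_one_of_pos (inv_pos.mpr hXpos)
    rw [Real.log_inv] at h1
    linarith
  have hXinv : X * X⁻¹ = 1 := mul_inv_cancel₀ hXpos.ne'
  have hXub : X * (1 + 2 * t * e) ≤ 1 := by
    have h1 : X⁻¹ ≥ 1 + 2 * t * e := by linarith [hloglb, hkey]
    nlinarith [hXpos]
  have hMt2 : M0 * t ^ 2 ≤ e * t / 2 := by nlinarith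
  nlinarith [hXub, hXlb, hMt2, mul_pos ht0 he, hte, sq_nonneg t]

set_option maxHeartbeats 1000000 in
private lemma cross_entry_le
    (S Θ : Matrix (Fin p) (Fin p) ℝ) (hSsymm : S.IsSymm) (lam : ℝ) (hlam : 0 < lam)
    (hsol : IsGlassoSolution S lam Θ)
    (A : Set (Fin p)) [DecidablePred (· ∈ A)] {a b : Fin p} (ha : a ∈ A) (hb : b ∉ A)
    (hblock : ∀ i j, i ∈ A → j ∉ A → Θ i j = 0)
    (hblock' : ∀ i j, i ∉ A → j ∈ A → Θ i j = 0) :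
    ¬ lam < |S a b| := by
  intro hcross
  obtain ⟨hsymm, hPD, hopt⟩ := hsol
  have hab : a ≠ b := fun h => hb (h ▸ ha)
  -- the sign
  set s : ℝ := if 0 ≤ S a b then (-1 : ℝ) else 1 with hs_def
  have hs : s * S a b = -|S a b| := by
    by_cases h : 0 ≤ S a b
    · simp [hs_def, h, abs_of_nonneg h]
    · simp [hs_def, h, abs_of_neg (lt_of_not_ge h)]
  have habs_s : |s| = 1 := by
    by_cases h : 0 ≤ S a b <;> simp [hs_def, h]
  -- the perturbation matrix
  set E : Matrix (Fin p) (Fin p) ℝ :=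
    Matrix.of (fun i j => if (i = a ∧ j = b) ∨ (i = b ∧ j = a) then s else 0) with hE_def
  have hE0 : ∀ i j, ¬(i = a ∧ j = b) → ¬(i = b ∧ j = a) → E i j = 0 := by
    intro i j h1 h2; simp only [hE_def, Matrix.of_apply]; rw [if_neg]; tauto
  have hEab : E a b = s := by simp [hE_def]
  have hEba : E b a = s := by simp [hE_def]
  have hEsymm : E.IsSymm := by
    ext i j
    simp only [hE_def, Matrix.transpose_apply, Matrix.of_apply]
    exact if_congr (by tauto) rfl rfl
  -- trace of M * E
  have htr : ∀ M : Matrix (Fin p) (Fin p) ℝ, (M * E).trace = s * (M a b + M b a) := by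
    intro M
    have h1 : (M * E).trace = ∑ i, ∑ j, M i j * E j i := by
      simp [Matrix.trace, Matrix.diag, Matrix.mul_apply]
    rw [h1, sum_sum_eq_pair hab (f := fun i j => M i j * E j i)
      (fun i j h1' h2' => by
        simp only [hE0 j i (fun hc => h2' ⟨hc.2, hc.1⟩) (fun hc => h1' ⟨hc.2, hc.1⟩), mul_zero])]
    rw [hEba, hEab]; ring
  -- quadratic form of E
  have hquad : ∀ x : Fin p → ℝ, x ⬝ᵥ (E *ᵥ x) = 2 * s * (x a * x b) := by
    intro x
    have h1 : x ⬝ᵥ (E *ᵥ x) = ∑ i, ∑ j, x i * (E i j * x j) := by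
      simp [dotProduct, Matrix.mulVec, Finset.mul_sum]
    rw [h1, sum_sum_eq_pair hab (f := fun i j => x i * (E i j * x j))
      (fun i j h1' h2' => by simp only [hE0 i j h1' h2', zero_mul, mul_zero])]
    rw [hEab, hEba]; ring
  -- smallest eigenvalue
  have hne : Nonempty (Fin p) := ⟨a⟩
  have hherm : Θ.IsHermitian := hPD.1
  set c : ℝ := Finset.univ.inf' Finset.univ_nonempty hherm.eigenvalues with hc_def
  have hc : 0 < c := by
    rw [hc_def, Finset.lt_inf'_iff]
    exact fun i _ => hPD.eigenvalues_pos i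
  have hPSD : (Θ - c • 1).PosSemidef := by
    set U : Matrix (Fin p) (Fin p) ℝ := (hherm.eigenvectorUnitary : Matrix (Fin p) (Fin p) ℝ)
      with hU_def
    have hUU : U * star U = 1 := (Matrix.mem_unitaryGroup_iff).mp hherm.eigenvectorUnitary.2
    have hspec : Θ = U * Matrix.diagonal (RCLike.ofReal ∘ hherm.eigenvalues) * star U :=
      hherm.spectral_theorem
    have hkey : Θ - c • 1 = U * Matrix.diagonal (fun i => hherm.eigenvalues i - c) * star U := by
      have hdiag : Matrix.diagonal (fun i => hherm.eigenvalues i - c)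
          = Matrix.diagonal (RCLike.ofReal ∘ hherm.eigenvalues) - c • 1 := by
        ext i j
        rcases eq_or_ne i j with rfl | h
        · simp [Matrix.diagonal_apply_eq, Matrix.one_apply_eq, RCLike.ofReal]
        · simp [Matrix.diagonal_apply_ne _ h, Matrix.one_apply_ne h]
      have hcU : U * (c • (1 : Matrix (Fin p) (Fin p) ℝ)) * star U = c • 1 := by
        rw [Matrix.mul_smul, mul_one, Matrix.smul_mul, hUU]
      rw [hdiag, Matrix.mul_sub, Matrix.sub_mul, ← hspec, hcU]
    rw [hkey]
    exact (Matrix.PosSemidef.diagonal (fun i => sub_nonneg.mpr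
      (Finset.inf'_le _ (Finset.mem_univ i)))).mul_mul_conjTranspose_same U
  -- positive definiteness of perturbations
  have hPDt : ∀ t : ℝ, |t| < c → (Θ + t • E).PosDef := by
    intro t ht
    have h1 : (c • (1 : Matrix (Fin p) (Fin p) ℝ) + t • E).PosDef := by
      rw [Matrix.posDef_iff_dotProduct_mulVec]
      constructor
      · rw [Matrix.IsHermitian, Matrix.conjTranspose_eq_transpose_of_trivial]
        exact ((Matrix.isSymm_one).smul c).add (hEsymm.smul t)
      · intro x hx
        have hsx : star x = x := by
          funext i; simp
        rw [hsx, Matrix.add_mulVec, dotProduct_add, Matrix.smul_mulVec,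
          Matrix.smul_mulVec, Matrix.one_mulVec, dotProduct_smul,
          dotProduct_smul, smul_eq_mul, smul_eq_mul, hquad]
        have hxx : x a * x a + x b * x b ≤ x ⬝ᵥ x :=
          calc x a * x a + x b * x b
              = ∑ i ∈ ({a, b} : Finset (Fin p)), x i * x i :=
                (Finset.sum_pair hab (f := fun i => x i * x i)).symm
            _ ≤ ∑ i, x i * x i := Finset.sum_le_sum_of_subset_of_nonneg
                (Finset.subset_univ _) (fun i _ _ => mul_self_nonneg (x i))
            _ = x ⬝ᵥ x := rfl
        have hxpos : 0 < x ⬝ᵥ x := by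
          obtain ⟨i, hi⟩ := Function.ne_iff.mp hx
          have h2 : x ⬝ᵥ x = ∑ i, x i * x i := rfl
          rw [h2]
          exact Finset.sum_pos' (fun j _ => mul_self_nonneg (x j))
            ⟨i, Finset.mem_univ i, mul_self_pos.mpr (by simpa using hi)⟩
        have hts : |t * s| < c := by
          rw [abs_mul, habs_s, mul_one]; exact ht
        obtain ⟨hu1, hu2⟩ := abs_lt.mp hts
        rcases le_or_gt 0 (t * s) with hu | hu
        · nlinarith [mul_nonneg hu (sq_nonneg (x a + x b)),
            mul_nonneg hu (sub_nonneg.mpr hxx),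
            mul_pos (by linarith : (0:ℝ) < c - t * s) hxpos]
        · nlinarith [mul_nonneg (neg_nonneg.mpr hu.le) (sq_nonneg (x a - x b)),
            mul_nonneg (neg_nonneg.mpr hu.le) (sub_nonneg.mpr hxx),
            mul_pos (by linarith : (0:ℝ) < c + t * s) hxpos]
    have h2 := h1.add_posSemidef hPSD
    have h3 : c • (1 : Matrix (Fin p) (Fin p) ℝ) + t • E + (Θ - c • 1) = Θ + t • E := by
      abel
    rwa [h3] at h2
  -- inverse has zero entries across the block
  have hdet : 0 < Θ.det := hPD.det_pos
  have hunit : IsUnit Θ.det := hdet.ne'.isUnit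
  set d : Fin p → ℝ := fun i => if i ∈ A then 1 else -1 with hd_def
  set D : Matrix (Fin p) (Fin p) ℝ := Matrix.diagonal d with hD_def
  have hD2 : D * D = 1 := by
    have hdd : (fun i => d i * d i) = (1 : Fin p → ℝ) :=
      funext fun i => by by_cases h : i ∈ A <;> simp [hd_def, h] <;> norm_num
    rw [hD_def, Matrix.diagonal_mul_diagonal, hdd]
    exact Matrix.diagonal_one
  have hDinv : D⁻¹ = D := Matrix.inv_eq_right_inv hD2
  have hDTD : D * Θ * D = Θ := by
    ext i j
    rw [Matrix.mul_diagonal, Matrix.diagonal_mul]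
    by_cases hi : i ∈ A <;> by_cases hj : j ∈ A
    · simp [hd_def, hi, hj]
    · simp [hd_def, hi, hj, hblock i j hi hj]
    · simp [hd_def, hi, hj, hblock' i j hi hj]
    · simp [hd_def, hi, hj]
  have hTinv : Θ⁻¹ = D * Θ⁻¹ * D := by
    conv_lhs => rw [← hDTD]
    rw [Matrix.mul_inv_rev, Matrix.mul_inv_rev, hDinv, ← mul_assoc]
  have hinv_ab : Θ⁻¹ a b = 0 := by
    have h1 : Θ⁻¹ a b = d a * Θ⁻¹ a b * d b := by
      conv_lhs => rw [hTinv]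
      rw [Matrix.mul_diagonal, Matrix.diagonal_mul]
    simp only [hd_def, if_pos ha, if_neg hb] at h1
    linarith
  have hinv_ba : Θ⁻¹ b a = 0 := by
    have h1 : Θ⁻¹ b a = d b * Θ⁻¹ b a * d a := by
      conv_lhs => rw [hTinv]
      rw [Matrix.mul_diagonal, Matrix.diagonal_mul]
    simp only [hd_def, if_pos ha, if_neg hb] at h1
    linarith
  have htrace0 : (Θ⁻¹ * E).trace = 0 := by
    rw [htr, hinv_ab, hinv_ba]; ring
  -- determinant expansion
  set Pq : Polynomial ℝ :=
    ((1 + (Polynomial.X : Polynomial ℝ) • ((Θ⁻¹ * E).map Polynomial.C)).det).divX.divX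
    with hPq_def
  have hdetexp : ∀ t : ℝ, (Θ + t • E).det = Θ.det * (1 + Pq.eval t * t ^ 2) := by
    intro t
    have hfact : Θ + t • E = Θ * (1 + t • (Θ⁻¹ * E)) := by
      rw [mul_add, mul_one, Matrix.mul_smul, ← mul_assoc, Θ.mul_nonsing_inv hunit, one_mul]
    rw [hfact, Matrix.det_mul, Matrix.det_one_add_smul t (Θ⁻¹ * E), htrace0]
    ring
  -- bound the remainder polynomial near 0
  set M0 : ℝ := |Pq.eval 0| + 1 with hM0_def
  have hM0 : 0 < M0 := by positivity
  obtain ⟨δ, hδpos, hδ⟩ : ∃ δ > 0, ∀ u : ℝ, |u| < δ → |Pq.eval u| < M0 := by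
    have hcont : ContinuousAt (fun u : ℝ => Pq.eval u) 0 := Pq.continuousAt
    rcases Metric.continuousAt_iff.mp hcont 1 one_pos with ⟨δ, hδpos, hδ⟩
    refine ⟨δ, hδpos, fun u hu => ?_⟩
    have h2 := hδ (by simpa [Real.dist_eq] using hu)
    rw [Real.dist_eq] at h2
    calc |Pq.eval u| ≤ |Pq.eval u - Pq.eval 0| + |Pq.eval 0| := by
          simpa using abs_add_le (Pq.eval u - Pq.eval 0) (Pq.eval 0)
      _ < 1 + |Pq.eval 0| := by linarith
      _ = M0 := by rw [hM0_def]; ring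
  -- choose the step size
  set ε : ℝ := |S a b| - lam with hε_def
  have hε : 0 < ε := sub_pos.mpr hcross
  set t : ℝ := min (min (c / 2) (δ / 2)) (min (ε / (2 * M0)) (1 / (2 * (ε + 1)))) with ht_def
  have ht0 : 0 < t := by
    rw [ht_def]
    simp only [lt_min_iff]
    refine ⟨⟨by linarith, by linarith⟩, ⟨by positivity, by positivity⟩⟩
  have htc : t < c := lt_of_le_of_lt ((min_le_left _ _).trans (min_le_left _ _)) (by linarith)
  have htδ : t < δ := lt_of_le_of_lt ((min_le_left _ _).trans (min_le_right _ _)) (by linarith)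
  have htε : t ≤ ε / (2 * M0) := (min_le_right _ _).trans (min_le_left _ _)
  have htε2 : t ≤ 1 / (2 * (ε + 1)) := (min_le_right _ _).trans (min_le_right _ _)
  have hM0t : M0 * t ≤ ε / 2 := by
    rw [le_div_iff₀ (by positivity : (0:ℝ) < 2 * M0)] at htε
    nlinarith [htε]
  have htε3 : 2 * t * ε ≤ 1 := by
    rw [le_div_iff₀ (by positivity : (0:ℝ) < 2 * (ε + 1))] at htε2
    nlinarith [ht0.le]
  have ht1 : t ≤ 1 / 2 := by
    have : 1 / (2 * (ε + 1)) ≤ 1 / 2 := by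
      apply div_le_div_of_nonneg_left one_pos.le two_pos
      linarith
    linarith [htε2]
  -- the perturbed matrix
  have hPDΥ : (Θ + t • E).PosDef := hPDt t (by rw [abs_of_pos ht0]; exact htc)
  have hΥsymm : (Θ + t • E).IsSymm := hsymm.add (hEsymm.smul t)
  have hle := hopt (Θ + t • E) hΥsymm hPDΥ
  -- entries of the perturbed matrix
  have hΥapp : ∀ i j, (Θ + t • E) i j = Θ i j + t * E i j := by
    intro i j; simp [Matrix.add_apply, Matrix.smul_apply]
  have hΘab : Θ a b = 0 := hblock a b ha hb
  have hΘba : Θ b a = 0 := hblock' b a hb ha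
  -- penalty identity
  have hpen : ∑ j, ∑ j', (if j ≠ j' then |(Θ + t • E) j j'| else 0)
      = (∑ j, ∑ j', (if j ≠ j' then |Θ j j'| else 0)) + 2 * t := by
    have hdiff : ∑ i, ∑ j, ((if i ≠ j then |(Θ + t • E) i j| else 0)
        - (if i ≠ j then |Θ i j| else 0)) = 2 * t := by
      rw [sum_sum_eq_pair hab (fun i j h1 h2 => by
        simp only [hΥapp i j, hE0 i j h1 h2, mul_zero, add_zero, sub_self])]
      rw [hΥapp a b, hΥapp b a, hEab, hEba, hΘab, hΘba]
      rw [if_pos hab, if_pos (Ne.symm hab)]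
      simp only [zero_add, abs_zero, sub_zero, abs_mul, habs_s, mul_one,
        abs_of_pos ht0]
      simp [two_mul]
    have hsplit : ∑ i, ∑ j, ((if i ≠ j then |(Θ + t • E) i j| else 0)
        - (if i ≠ j then |Θ i j| else 0))
        = (∑ i, ∑ j, (if i ≠ j then |(Θ + t • E) i j| else 0))
          - ∑ i, ∑ j, (if i ≠ j then |Θ i j| else 0) := by
      rw [← Finset.sum_sub_distrib]
      exact Finset.sum_congr rfl fun i _ => Finset.sum_sub_distrib _ _
    rw [hsplit] at hdiff
    linarith
  -- trace identity
  have htrace : (S * (Θ + t • E)).trace = (S * Θ).trace + t * (-2 * |S a b|) := by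
    rw [mul_add, Matrix.mul_smul, Matrix.trace_add, Matrix.trace_smul, smul_eq_mul, htr S]
    have hSba : S b a = S a b := hSsymm.apply a b
    rw [hSba]
    nlinarith [hs]
  -- log det identity
  set X : ℝ := 1 + Pq.eval t * t ^ 2 with hX_def
  have hXdet : (Θ + t • E).det = Θ.det * X := hdetexp t
  have hqbound : |Pq.eval t| < M0 := hδ t (by rw [abs_of_pos ht0]; exact htδ)
  have hXlb' : 1 - M0 * t ^ 2 ≤ X ∧ X ≤ 1 + M0 * t ^ 2 := by
    obtain ⟨hq1, hq2⟩ := abs_lt.mp hqbound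
    constructor <;> nlinarith [sq_nonneg t]
  clear_value X Pq M0 t ε c s d D E
  have hXpos : 0 < X := by
    have h1 : 0 < Θ.det * X := hXdet ▸ hPDΥ.det_pos
    nlinarith
  have hlog : Real.log ((Θ + t • E).det) = Real.log Θ.det + Real.log X := by
    rw [hXdet, Real.log_mul hdet.ne' hXpos.ne']
  -- assemble the contradiction
  simp only [glassoObj] at hle
  rw [hlog, htrace, hpen] at hle
  have hkey : Real.log X ≤ -(2 * t * ε) := by
    rw [hε_def]
    nlinarith [hle]
  -- lower bound for log X
  have hXlb : 1 - M0 * t ^ 2 ≤ X := hXlb'.1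
  exact final_contradiction hXpos hM0 ht0 hε hM0t htε3 hkey hXlb

private lemma walk_transfer {V : Type*} {G H : SimpleGraph V}
    (h : ∀ a b, G.Adj a b → H.Reachable a b) {u v : V} (w : G.Walk u v) :
    H.Reachable u v := by
  induction w with
  | nil => exact SimpleGraph.Reachable.refl _
  | cons hadj _ ih => exact (h _ _ hadj).trans ih

end Helpers

/-- if the threshold graph of S at level λ is connected, then the estimated graph
of any graphical lasso solution with tuning parameter λ is connected; in particular the
graphical lasso estimate then consists of a single connected component containing all p
variables. -/
theorem glasso_connected_of_threshold_connected
    {p : ℕ} (hp : 1 ≤ p)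
    (S : Matrix (Fin p) (Fin p) ℝ) (hSsymm : S.IsSymm) (hSpsd : S.PosSemidef)
    (lam : ℝ) (hlam : 0 < lam)
    (Θhat : Matrix (Fin p) (Fin p) ℝ) (hΘhat : IsGlassoSolution S lam Θhat)
    (hconn : (thresholdGraph S lam).Connected) :
    (estimatedGraph Θhat).Connected ∧
      ∀ j j' : Fin p, (estimatedGraph Θhat).Reachable j j' := by
  classical
  set G := estimatedGraph Θhat with hG_def
  have hedge : ∀ a b : Fin p, (thresholdGraph S lam).Adj a b → G.Reachable a b := by
    intro a b hadj
    rw [thresholdGraph, SimpleGraph.fromRel_adj] at hadj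
    obtain ⟨hab, hSor⟩ := hadj
    have hSab : lam < |S a b| := by
      rcases hSor with h | h
      · exact h
      · rwa [hSsymm.apply a b] at h
    by_contra hnr
    set A : Set (Fin p) := {x | G.Reachable a x} with hA_def
    have ha : a ∈ A := SimpleGraph.Reachable.refl a
    have hb : b ∉ A := hnr
    have hadjmem : ∀ i j : Fin p, i ∈ A → Θhat i j ≠ 0 → i ≠ j → j ∈ A := by
      intro i j hi h0 hij
      have hGij : G.Adj i j := by
        rw [hG_def, estimatedGraph, SimpleGraph.fromRel_adj]
        exact ⟨hij, Or.inl h0⟩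
      exact hi.trans hGij.reachable
    have hblock : ∀ i j : Fin p, i ∈ A → j ∉ A → Θhat i j = 0 := by
      intro i j hi hj
      by_contra h0
      have hij : i ≠ j := fun h => hj (h ▸ hi)
      exact hj (hadjmem i j hi h0 hij)
    have hblock' : ∀ i j : Fin p, i ∉ A → j ∈ A → Θhat i j = 0 := by
      intro i j hi hj
      by_contra h0
      have hij : i ≠ j := fun h => hi (h ▸ hj)
      have hGij : G.Adj j i := by
        rw [hG_def, estimatedGraph, SimpleGraph.fromRel_adj]
        exact ⟨hij.symm, Or.inr h0⟩
      exact hi (hj.trans hGij.reachable)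
    exact cross_entry_le S Θhat hSsymm lam hlam hΘhat A ha hb hblock hblock' hSab
  have hreach : ∀ j j' : Fin p, G.Reachable j j' := by
    intro j j'
    obtain ⟨w⟩ := hconn.preconnected j j'
    exact walk_transfer hedge w
  have hne : Nonempty (Fin p) := ⟨⟨0, hp⟩⟩
  exact ⟨⟨hreach⟩, hreach⟩
end

section
/- Let p ≥ 1, let S be a p×p real symmetric positive semidefinite matrix, let c : {1,…,p} → {1,…,K} be a partition of the indices, and let λ_1, …, λ_K ≥ 0. For each k, let Θ̂_k be a minimizer of −log det Θ_k + trace(S_k Θ_k) + λ_k Σ_{j ≠ j'} |(Θ_k)_{j j'}| over symmetric positive definite matrices Θ_k of size |c⁻¹(k)|, where S_k is the principal submatrix of S indexed by c⁻¹(k). Let Θ̂ be the p×p matrix that is block diagonal with respect to c and whose principal submatrix indexed by c⁻¹(k) equals Θ̂_k for each k. Then Θ̂ minimizes −log det Θ + trace(S Θ) + Σ_{k=1}^K λ_k Σ_{j ≠ j', c(j)=c(j')=k} |Θ_{j j'}| over all symmetric positive definite p×p matrices Θ that are block diagonal with respect to c. (This is the penalized log likelihood interpretation of the cluster graphical lasso: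 it solves the weighted problem with weight λ_k on within-cluster entries and infinite weight on between-cluster entries.) -/
open Matrix BigOperators

/-- Per-block penalized negative log likelihood:
−log det M + tr(S M) + λ ∑_{i ≠ i'} |M_{ii'}|. -/
noncomputable def blockObj {n : Type*} [Fintype n] [DecidableEq n]
    (S : Matrix n n ℝ) (lam : ℝ) (M : Matrix n n ℝ) : ℝ :=
  -Real.log M.det + (S * M).trace + lam * ∑ i : n, ∑ i' : n, (if i ≠ i' then |M i i'| else 0)

/-- The cluster graphical lasso objective with cluster-specific penalties:
−log det Θ + tr(SΘ) + ∑_k λ_k ∑_{j ≠ j', c(j)=c(j')=k} |Θ_{jj'}|. -/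
noncomputable def cglObj {p K : ℕ} (S : Matrix (Fin p) (Fin p) ℝ)
    (c : Fin p → Fin K) (lam : Fin K → ℝ) (Θ : Matrix (Fin p) (Fin p) ℝ) : ℝ :=
  -Real.log Θ.det + (S * Θ).trace
    + ∑ k : Fin K, lam k * ∑ j : Fin p, ∑ j' : Fin p,
        (if j ≠ j' ∧ c j = k ∧ c j' = k then |Θ j j'| else 0)

/-- Summing over `Fin p` equals summing over fibers of `c`. -/
lemma cgl_sum_fiber {p K : ℕ} (c : Fin p → Fin K) (g : Fin p → ℝ) :
    ∑ j, g j = ∑ k : Fin K, ∑ i : {j : Fin p // c j = k}, g i.1 := by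
  rw [← Equiv.sum_comp (Equiv.sigmaFiberEquiv c) g, ← Finset.univ_sigma_univ,
    Finset.sum_sigma]
  rfl

/-- If `g` vanishes outside the fiber of `k`, the sum collapses to that fiber. -/
lemma cgl_sum_fiber_single {p K : ℕ} (c : Fin p → Fin K) (k : Fin K) (g : Fin p → ℝ)
    (hg : ∀ j, c j ≠ k → g j = 0) :
    ∑ j, g j = ∑ i : {j : Fin p // c j = k}, g i.1 := by
  rw [cgl_sum_fiber c g]
  refine Finset.sum_eq_single k ?_ (fun h => absurd (Finset.mem_univ k) h)
  intro k' _ hk'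
  exact Finset.sum_eq_zero fun i _ => hg i.1 (by rw [i.2]; exact hk')

/-- A double sum of a "block diagonal" function decomposes over fibers. -/
lemma cgl_sum_block {p K : ℕ} (c : Fin p → Fin K) (F : Fin p → Fin p → ℝ)
    (hF : ∀ j j', c j ≠ c j' → F j j' = 0) :
    ∑ j, ∑ j', F j j'
      = ∑ k : Fin K, ∑ i : {j : Fin p // c j = k}, ∑ i' : {j : Fin p // c j = k}, F i.1 i'.1 := by
  rw [cgl_sum_fiber c]
  refine Finset.sum_congr rfl fun k _ => Finset.sum_congr rfl fun i _ => ?_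
  exact cgl_sum_fiber_single c k _ fun j' hj' => hF i.1 j' fun h => hj' (h.symm.trans i.2)

/-- Principal submatrices (along fibers) of a positive definite matrix are positive definite. -/
lemma cgl_posDef_submatrix {p K : ℕ} (c : Fin p → Fin K) {Θ : Matrix (Fin p) (Fin p) ℝ}
    (hΘ : Θ.PosDef) (k : Fin K) :
    (Θ.submatrix (Subtype.val : {j : Fin p // c j = k} → Fin p) Subtype.val).PosDef := by
  refine Matrix.PosDef.of_dotProduct_mulVec_pos (hΘ.isHermitian.submatrix _) fun x hx => ?_
  set y : Fin p → ℝ := fun j => if h : c j = k then x ⟨j, h⟩ else 0 with hy_def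
  have hyk : ∀ i : {j : Fin p // c j = k}, y i.1 = x i := by
    intro i; simp only [hy_def, dif_pos i.2]
  have hy0 : ∀ j, c j ≠ k → y j = 0 := by
    intro j hj; simp only [hy_def, dif_neg hj]
  have hy : y ≠ 0 := by
    intro h0
    apply hx
    funext i
    have := congrFun h0 i.1
    rw [hyk i] at this
    exact this
  have hpos := hΘ.dotProduct_mulVec_pos hy
  have hEq : dotProduct (star y) (Θ *ᵥ y)
      = dotProduct (star x)
          ((Θ.submatrix (Subtype.val : {j : Fin p // c j = k} → Fin p) Subtype.val) *ᵥ x) := by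
    simp only [dotProduct, mulVec, star_trivial, Matrix.submatrix_apply]
    rw [cgl_sum_fiber_single c k _
      (fun j hj => by rw [hy0 j hj, zero_mul])]
    refine Finset.sum_congr rfl fun i _ => ?_
    rw [hyk i]
    congr 1
    rw [cgl_sum_fiber_single c k _
      (fun j' hj' => by rw [hy0 j' hj', mul_zero])]
    exact Finset.sum_congr rfl fun i' _ => by rw [hyk i']
  rw [← hEq]
  exact hpos

/-- Decomposition of the CGL objective over blocks. -/
lemma cgl_decomp {p K : ℕ} (S : Matrix (Fin p) (Fin p) ℝ) (c : Fin p → Fin K)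
    (lam : Fin K → ℝ) (Θ : Matrix (Fin p) (Fin p) ℝ) (hΘ : Θ.PosDef)
    (hb : ∀ j j' : Fin p, c j ≠ c j' → Θ j j' = 0) :
    cglObj S c lam Θ = ∑ k : Fin K,
      blockObj (S.submatrix (Subtype.val : {j : Fin p // c j = k} → Fin p) Subtype.val)
        (lam k) (Θ.submatrix Subtype.val Subtype.val) := by
  have hbt : Θ.BlockTriangular c := fun i j h => hb i j (ne_of_lt h).symm
  have hdet : Θ.det = ∏ k : Fin K, (Θ.submatrix
      (Subtype.val : {j : Fin p // c j = k} → Fin p) Subtype.val).det := by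
    rw [hbt.det_fintype]; rfl
  have hdetk : ∀ k : Fin K, (Θ.submatrix
      (Subtype.val : {j : Fin p // c j = k} → Fin p) Subtype.val).det ≠ 0 :=
    fun k => (cgl_posDef_submatrix c hΘ k).det_pos.ne'
  have hlog : Real.log Θ.det = ∑ k : Fin K, Real.log (Θ.submatrix
      (Subtype.val : {j : Fin p // c j = k} → Fin p) Subtype.val).det := by
    rw [hdet, Real.log_prod fun k _ => hdetk k]
  have htrace : (S * Θ).trace = ∑ k : Fin K,
      ((S.submatrix (Subtype.val : {j : Fin p // c j = k} → Fin p) Subtype.val)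
        * (Θ.submatrix (Subtype.val : {j : Fin p // c j = k} → Fin p) Subtype.val)).trace := by
    simp only [Matrix.trace, Matrix.diag, Matrix.mul_apply, Matrix.submatrix_apply]
    exact cgl_sum_block c (fun j j' => S j j' * Θ j' j)
      (fun j j' h => show S j j' * Θ j' j = 0 by rw [hb j' j (Ne.symm h), mul_zero])
  have hpen : ∀ k : Fin K,
      (∑ j : Fin p, ∑ j' : Fin p, if j ≠ j' ∧ c j = k ∧ c j' = k then |Θ j j'| else 0)
      = ∑ i : {j : Fin p // c j = k}, ∑ i' : {j : Fin p // c j = k},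
          if i ≠ i' then |Θ.submatrix Subtype.val Subtype.val i i'| else 0 := by
    intro k
    rw [cgl_sum_fiber_single c k _
      (fun j hj => Finset.sum_eq_zero fun j' _ => if_neg fun h => hj h.2.1)]
    refine Finset.sum_congr rfl fun i _ => ?_
    rw [cgl_sum_fiber_single c k _ (fun j' hj' => if_neg fun h => hj' h.2.2)]
    refine Finset.sum_congr rfl fun i' _ => ?_
    simp [i.2, i'.2, Ne, Subtype.ext_iff]
  have hP : (∑ k : Fin K, lam k * ∑ j : Fin p, ∑ j' : Fin p,
        (if j ≠ j' ∧ c j = k ∧ c j' = k then |Θ j j'| else 0))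
      = ∑ k : Fin K, lam k * ∑ i : {j : Fin p // c j = k}, ∑ i' : {j : Fin p // c j = k},
          (if i ≠ i' then |Θ.submatrix Subtype.val Subtype.val i i'| else 0) :=
    Finset.sum_congr rfl fun k _ => by rw [hpen k]
  rw [cglObj, hlog, htrace, hP]
  simp only [blockObj]
  rw [Finset.sum_add_distrib, Finset.sum_add_distrib, Finset.sum_neg_distrib]
  rfl

/-- the block diagonal matrix assembled from per-cluster graphical lasso solutions
minimizes the cluster graphical lasso objective over all symmetric positive definite matrices
that are block diagonal with respect to the partition c. -/
theorem cgl_block_assembly_minimizes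
    {p K : ℕ} (hp : 1 ≤ p)
    (S : Matrix (Fin p) (Fin p) ℝ) (hSsymm : S.IsSymm) (hSpsd : S.PosSemidef)
    (c : Fin p → Fin K) (hc : Function.Surjective c)
    (lam : Fin K → ℝ) (hlam : ∀ k, 0 ≤ lam k)
    (Θhatk : (k : Fin K) → Matrix {j : Fin p // c j = k} {j : Fin p // c j = k} ℝ)
    (hΘhatk : ∀ k : Fin K,
      (Θhatk k).IsSymm ∧ (Θhatk k).PosDef ∧
        ∀ M : Matrix {j : Fin p // c j = k} {j : Fin p // c j = k} ℝ,
          M.IsSymm → M.PosDef →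
          blockObj (S.submatrix (Subtype.val : {j : Fin p // c j = k} → Fin p) Subtype.val)
              (lam k) (Θhatk k)
            ≤ blockObj (S.submatrix (Subtype.val : {j : Fin p // c j = k} → Fin p) Subtype.val)
              (lam k) M)
    (Θhat : Matrix (Fin p) (Fin p) ℝ)
    (hblock : ∀ j j' : Fin p, c j ≠ c j' → Θhat j j' = 0)
    (hsub : ∀ (k : Fin K) (i i' : {j : Fin p // c j = k}), Θhat i.1 i'.1 = Θhatk k i i') :
    Θhat.IsSymm ∧ Θhat.PosDef ∧
      ∀ Θ : Matrix (Fin p) (Fin p) ℝ, Θ.IsSymm → Θ.PosDef →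
        (∀ j j' : Fin p, c j ≠ c j' → Θ j j' = 0) →
        cglObj S c lam Θhat ≤ cglObj S c lam Θ := by
  have hsubeq : ∀ k : Fin K,
      Θhat.submatrix (Subtype.val : {j : Fin p // c j = k} → Fin p) Subtype.val = Θhatk k := by
    intro k; ext i i'; exact hsub k i i'
  have hsym : Θhat.IsSymm := by
    apply Matrix.IsSymm.ext
    intro j j'
    by_cases h : c j = c j'
    · rw [hsub (c j) ⟨j', h.symm⟩ ⟨j, rfl⟩, hsub (c j) ⟨j, rfl⟩ ⟨j', h.symm⟩]
      exact (hΘhatk (c j)).1.apply _ _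
    · rw [hblock j j' h, hblock j' j (Ne.symm h)]
  have hpd : Θhat.PosDef := by
    refine Matrix.PosDef.of_dotProduct_mulVec_pos ?_ fun x hx => ?_
    · ext i j
      simp only [Matrix.conjTranspose_apply, star_trivial]
      exact hsym.apply i j
    · have hEq : dotProduct (star x) (Θhat *ᵥ x)
          = ∑ k : Fin K, dotProduct (star (fun i : {j : Fin p // c j = k} => x i.1))
              ((Θhatk k) *ᵥ (fun i : {j : Fin p // c j = k} => x i.1)) := by
        simp only [dotProduct, mulVec, star_trivial, Finset.mul_sum]
        exact cgl_sum_block c (fun j j' => x j * (Θhat j j' * x j'))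
          (fun j j' h => show x j * (Θhat j j' * x j') = 0 by
            rw [hblock j j' h, zero_mul, mul_zero]) |>.trans
          (Finset.sum_congr rfl fun k _ => Finset.sum_congr rfl fun i _ =>
            Finset.sum_congr rfl fun i' _ => by rw [hsub k i i'])
      rw [hEq]
      obtain ⟨j, hj⟩ := Function.ne_iff.mp hx
      refine Finset.sum_pos' (fun k _ => ?_) ⟨c j, Finset.mem_univ _, ?_⟩
      · exact (hΘhatk k).2.1.posSemidef.dotProduct_mulVec_nonneg _
      · refine (hΘhatk (c j)).2.1.dotProduct_mulVec_pos ?_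
        intro h0
        exact hj (by simpa using congrFun h0 ⟨j, rfl⟩)
  refine ⟨hsym, hpd, ?_⟩
  intro Θ hΘsymm hΘpd hΘblock
  rw [cgl_decomp S c lam Θhat hpd hblock, cgl_decomp S c lam Θ hΘpd hΘblock]
  refine Finset.sum_le_sum fun k _ => ?_
  rw [hsubeq k]
  exact (hΘhatk k).2.2 _ (hΘsymm.submatrix _) (cgl_posDef_submatrix c hΘpd k)
end

section
/- Let p ≥ 1, let Σ be a p×p real symmetric matrix, let c : {1,…,p} → {1,…,K} be a partition of the indices, and let a > 0. Suppose Σ is block diagonal with respect to c (Σ_{i j} = 0 whenever c(i) ≠ c(j)) and that |Σ_{i j}| ≥ a for all pairs i, j with c(i) = c(j). Let S̃ be any p×p matrix with nonnegative entries satisfying max_{i,j} |S̃_{i j} − |Σ_{i j}|| < a/2. Then the connected components of the simple graph on {1,…,p} with an edge between distinct i and j if and only if S̃_{i j} > a/2 are exactly the fibers c⁻¹(1), …, c⁻¹(K); that is, distinct i and j lie in the same connected component of this graph if and only if c(i) = c(j). -/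
open Matrix BigOperators

/-- if Σ is block diagonal with respect to a partition c, with all within-block
entries at least a > 0 in absolute value, and S̃ is a nonnegative matrix whose entries deviate
from |Σ| by strictly less than a/2, then the connected components of the graph obtained by
thresholding S̃ at level a/2 are exactly the fibers of c. -/
theorem threshold_graph_recovers_blocks
    {p K : ℕ} (hp : 1 ≤ p)
    (Sig : Matrix (Fin p) (Fin p) ℝ)
    (c : Fin p → Fin K) (hc : Function.Surjective c)
    (a : ℝ) (ha : 0 < a)
    (hblock : ∀ i j : Fin p, c i ≠ c j → Sig i j = 0)
    (hsignal : ∀ i j : Fin p, c i = c j → a ≤ |Sig i j|)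
    (Stilde : Matrix (Fin p) (Fin p) ℝ)
    (hnonneg : ∀ i j : Fin p, 0 ≤ Stilde i j)
    (hdev : ∀ i j : Fin p, abs (Stilde i j - |Sig i j|) < a / 2) :
    ∀ i j : Fin p,
      (SimpleGraph.fromRel (fun i j : Fin p => a / 2 < Stilde i j)).Reachable i j ↔
        c i = c j := by
  have hedge : ∀ i j : Fin p, a / 2 < Stilde i j → c i = c j := by
    intro i j h
    by_contra hne
    have h0 : Sig i j = 0 := hblock i j hne
    have := hdev i j
    rw [h0, abs_zero, sub_zero, abs_of_nonneg (hnonneg i j)] at this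
    linarith
  intro i j
  constructor
  · intro h
    refine h.elim fun w => ?_
    induction w with
    | nil => rfl
    | cons hadj _ ih =>
      rename_i u v t htail
      rw [SimpleGraph.fromRel_adj] at hadj
      rcases hadj.2 with h' | h'
      · exact (hedge _ _ h').trans (ih ⟨htail⟩)
      · exact ((hedge _ _ h').symm).trans (ih ⟨htail⟩)
  · intro hcij
    rcases eq_or_ne i j with rfl | hne
    · exact SimpleGraph.Reachable.refl i
    · apply SimpleGraph.Adj.reachable
      rw [SimpleGraph.fromRel_adj]
      refine ⟨hne, Or.inl ?_⟩
      have hs := hsignal i j hcij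
      have := hdev i j
      have := abs_sub_lt_iff.mp this
      linarith [this.2]
end

section
/- Let (Ω, μ) be a probability space, let p ≥ 2 and n ≥ 1 be integers, let Σ be a p×p real symmetric matrix, let c : {1,…,p} → {1,…,K} be a partition of the indices, and let S : Ω → (p×p real matrices) be a measurable random matrix. Suppose Σ is block diagonal with respect to c, and that there exists t > 0 with |Σ_{i j}| ≥ 2 t √(log p / n) for all pairs i, j with c(i) = c(j). Suppose further there exist constants c₁ > 0 and c₂ > 0 such that for every pair (i, j) and every δ > 0, μ({ω : |S(ω)_{i j} − Σ_{i j}| ≥ δ}) ≤ c₁ · exp(−c₂ n δ²). For ω ∈ Ω, let G(ω) be the simple graph on {1,…,p} with an edge between distinct i and j if and only if |S(ω)_{i j}| > t √(log p / n). Then μ({ω : the connected components of G(ω) are not exactly the fibers c⁻¹(1), …, c⁻¹(K)}) ≤ c₁ · p^{2 − c₂ t²}. -/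
open MeasureTheory BigOperators

/-- probabilistic recovery of the connected components. If Σ is block diagonal
with respect to the partition c with within-block entries at least 2t√(log p / n) in absolute
value, and the entries of the random matrix S concentrate around those of Σ at sub-Gaussian
rate c₁ exp(−c₂ n δ²), then with probability at least 1 − c₁ p^{2 − c₂ t²} the connected
components of the graph obtained by thresholding |S| at level t√(log p / n) are exactly the
fibers of c. -/
theorem threshold_graph_recovers_blocks_with_high_probability
    {Ω : Type*} [MeasurableSpace Ω] (μ : Measure Ω) [IsProbabilityMeasure μ]
    (p n K : ℕ) (hp : 2 ≤ p) (hn : 1 ≤ n)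
    (Sig : Matrix (Fin p) (Fin p) ℝ) (hSig : Sig.IsSymm)
    (c : Fin p → Fin K) (hc : Function.Surjective c)
    (hblock : ∀ i j : Fin p, c i ≠ c j → Sig i j = 0)
    (t : ℝ) (ht : 0 < t)
    (hsignal : ∀ i j : Fin p, c i = c j →
      2 * t * Real.sqrt (Real.log p / n) ≤ |Sig i j|)
    (S : Ω → Matrix (Fin p) (Fin p) ℝ)
    (hSmeas : ∀ i j : Fin p, Measurable (fun ω => S ω i j))
    (c₁ c₂ : ℝ) (hc₁ : 0 < c₁) (hc₂ : 0 < c₂)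
    (hconc : ∀ (i j : Fin p) (δ : ℝ), 0 < δ →
      μ {ω | δ ≤ |S ω i j - Sig i j|} ≤ ENNReal.ofReal (c₁ * Real.exp (-(c₂ * n * δ ^ 2)))) :
    μ {ω | ¬ ∀ i j : Fin p,
        (SimpleGraph.fromRel
            (fun i j : Fin p => t * Real.sqrt (Real.log p / n) < |S ω i j|)).Reachable i j ↔
          c i = c j}
      ≤ ENNReal.ofReal (c₁ * (p : ℝ) ^ (2 - c₂ * t ^ 2)) := by
  set δ : ℝ := t * Real.sqrt (Real.log p / n) with hδdef
  have hp0 : (0 : ℝ) < p := by positivity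
  have hn0 : (0 : ℝ) < n := by exact_mod_cast hn
  have hlogp : 0 < Real.log p := Real.log_pos (by exact_mod_cast hp)
  have hδpos : 0 < δ := by
    have : 0 < Real.log p / n := div_pos hlogp hn0
    exact mul_pos ht (Real.sqrt_pos.mpr this)
  -- deterministic: if all entries are within δ, the graph recovers the blocks
  have hgood : ∀ ω : Ω, (∀ i j : Fin p, |S ω i j - Sig i j| < δ) →
      ∀ i j : Fin p,
        (SimpleGraph.fromRel
            (fun i j : Fin p => δ < |S ω i j|)).Reachable i j ↔ c i = c j := by
    intro ω hω i j
    have hedge : ∀ a b : Fin p,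
        (SimpleGraph.fromRel (fun i j : Fin p => δ < |S ω i j|)).Adj a b → c a = c b := by
      intro a b hab
      obtain ⟨hne, hor⟩ := hab
      by_contra hcab
      have h1 : |S ω a b| < δ := by
        have := hω a b; rw [hblock a b hcab, sub_zero] at this; exact this
      have h2 : |S ω b a| < δ := by
        have := hω b a; rw [hblock b a (Ne.symm hcab), sub_zero] at this; exact this
      rcases hor with h | h
      · exact absurd h (not_lt.mpr h1.le)
      · exact absurd h (not_lt.mpr h2.le)
    constructor
    · intro hreach
      obtain ⟨w⟩ := hreach
      induction w with
      | nil => rfl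
      | cons h _ ih => exact (hedge _ _ h).trans ih
    · intro hcij
      by_cases hij : i = j
      · subst hij; exact SimpleGraph.Reachable.refl i
      · refine SimpleGraph.Adj.reachable ⟨hij, Or.inl ?_⟩
        have hs := hsignal i j hcij
        have hw := hω i j
        have : |Sig i j| - |S ω i j| ≤ |S ω i j - Sig i j| := by
          have := abs_sub_abs_le_abs_sub (Sig i j) (S ω i j)
          rwa [abs_sub_comm] at this
        nlinarith [abs_nonneg (S ω i j)]
  -- union bound
  have hsubset : {ω | ¬ ∀ i j : Fin p,
        (SimpleGraph.fromRel
            (fun i j : Fin p => δ < |S ω i j|)).Reachable i j ↔ c i = c j} ⊆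
      ⋃ ij ∈ (Finset.univ : Finset (Fin p × Fin p)),
        {ω | δ ≤ |S ω ij.1 ij.2 - Sig ij.1 ij.2|} := by
    intro ω hω
    by_contra hmem
    simp only [Set.mem_iUnion, Finset.mem_univ, Set.mem_setOf_eq, not_exists, not_le] at hmem
    exact hω (hgood ω (fun i j => hmem (i, j) (by trivial)) )
  have hunion := (measure_mono hsubset).trans
    (measure_biUnion_finset_le (μ := μ) (Finset.univ : Finset (Fin p × Fin p))
      (fun ij => {ω | δ ≤ |S ω ij.1 ij.2 - Sig ij.1 ij.2|}))
  -- bound each term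
  have hterm : ∀ ij : Fin p × Fin p,
      μ {ω | δ ≤ |S ω ij.1 ij.2 - Sig ij.1 ij.2|}
        ≤ ENNReal.ofReal (c₁ * (p : ℝ) ^ (-(c₂ * t ^ 2))) := by
    intro ij
    have h1 := hconc ij.1 ij.2 δ hδpos
    have hδsq : c₂ * n * δ ^ 2 = c₂ * t ^ 2 * Real.log p := by
      have : δ ^ 2 = t ^ 2 * (Real.log p / n) := by
        rw [hδdef, mul_pow, Real.sq_sqrt (le_of_lt (div_pos hlogp hn0))]
      rw [this]; field_simp
    have hexp : Real.exp (-(c₂ * n * δ ^ 2)) = (p : ℝ) ^ (-(c₂ * t ^ 2)) := by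
      rw [hδsq, Real.rpow_def_of_pos hp0]
      ring_nf
    rwa [hexp] at h1
  have hsum : μ {ω | ¬ ∀ i j : Fin p,
        (SimpleGraph.fromRel
            (fun i j : Fin p => δ < |S ω i j|)).Reachable i j ↔ c i = c j}
      ≤ (p * p : ℕ) • ENNReal.ofReal (c₁ * (p : ℝ) ^ (-(c₂ * t ^ 2))) := by
    refine hunion.trans ?_
    calc ∑ ij : Fin p × Fin p, μ {ω | δ ≤ |S ω ij.1 ij.2 - Sig ij.1 ij.2|}
        ≤ ∑ _ij : Fin p × Fin p, ENNReal.ofReal (c₁ * (p : ℝ) ^ (-(c₂ * t ^ 2))) :=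
          Finset.sum_le_sum (fun ij _ => hterm ij)
      _ = (p * p : ℕ) • ENNReal.ofReal (c₁ * (p : ℝ) ^ (-(c₂ * t ^ 2))) := by
          rw [Finset.sum_const]
          simp [Fintype.card_prod]
  refine hsum.trans ?_
  rw [nsmul_eq_mul, ← ENNReal.ofReal_natCast, ← ENNReal.ofReal_mul (by positivity)]
  refine ENNReal.ofReal_le_ofReal (le_of_eq ?_)
  have : (p : ℝ) ^ (2 - c₂ * t ^ 2) = (p : ℝ) ^ (2 : ℝ) * (p : ℝ) ^ (-(c₂ * t ^ 2)) := by
    rw [← Real.rpow_add hp0]; ring_nf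
  rw [this]
  push_cast
  rw [Real.rpow_two]
  ring
end

section
/- Let p ≥ 1 and let Θ be a p×p real symmetric positive definite matrix. Let G be the simple graph on {1,…,p} with an edge between distinct i and j if and only if Θ_{i j} ≠ 0, and suppose G is acyclic (a forest). Then for every pair of indices i, j lying in the same connected component of G, the (i, j) entry of the inverse matrix Σ = Θ⁻¹ is nonzero. -/
open Matrix BigOperators

namespace ForestAux
open SimpleGraph Walk

private lemma exists_leaf {V : Type*} [Fintype V] [Nonempty V] (G : SimpleGraph V)
    (hG : G.IsAcyclic) : ∃ v : V, ∀ a, G.Adj a v → ∀ b, G.Adj b v → a = b := by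
  classical
  set P : ℕ → Prop := fun n => ∃ u v : V, ∃ p : G.Walk u v, p.IsPath ∧ p.length = n with hP
  have h0 : P 0 := ⟨Classical.arbitrary V, Classical.arbitrary V, Walk.nil, by simp, rfl⟩
  set N := Nat.findGreatest P (Fintype.card V) with hN
  have hPN : P N := Nat.findGreatest_spec (Nat.zero_le _) h0
  have hmax : ∀ m, P m → m ≤ N := by
    intro m hm
    by_contra hlt
    obtain ⟨u, v, p, hp, hl⟩ := hm
    exact Nat.findGreatest_is_greatest (not_le.mp hlt) (hl ▸ (hp.length_lt).le)
      ⟨u, v, p, hp, hl⟩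
  obtain ⟨u, v, p, hp, hlen⟩ := hPN
  refine ⟨v, ?_⟩
  have hsup : ∀ a, G.Adj a v → a ∈ p.support := by
    intro a ha
    by_contra hna
    have hpath : ((Walk.cons ha p.reverse).reverse).IsPath := by
      apply Walk.IsPath.reverse
      exact (hp.reverse).cons (by simpa [Walk.support_reverse] using hna)
    have := hmax _ ⟨_, _, _, hpath, rfl⟩
    simp only [Walk.length_reverse, Walk.length_cons, hlen] at this
    omega
  intro a ha b hb
  have hvu : v ≠ u := by
    intro h
    subst h
    have hmem := hsup a ha
    rw [(Walk.isPath_iff_eq_nil (p := p)).mp hp] at hmem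
    simp at hmem
    exact ha.ne hmem
  -- decompose p.reverse = cons hw r
  obtain ⟨w, hw, r, hqe⟩ := (p.reverse).exists_eq_cons_of_ne hvu
  have hqpath : (p.reverse).IsPath := hp.reverse
  have hrpath : r.IsPath := by rw [hqe] at hqpath; exact hqpath.of_cons
  have hvnr : v ∉ r.support := by
    rw [hqe] at hqpath
    have := hqpath.2
    simp only [Walk.support_cons, List.nodup_cons] at this
    exact this.1
  -- key claim: every neighbor of v equals w
  have key : ∀ a, G.Adj a v → a = w := by
    intro a ha
    by_contra haw
    have hav : a ≠ v := ha.ne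
    have har : a ∈ r.support := by
      have h2 : a ∈ (p.reverse).support := by
        rw [Walk.support_reverse, List.mem_reverse]; exact hsup a ha
      rw [hqe, Walk.support_cons, List.mem_cons] at h2
      rcases h2 with h1 | h1
      · exact absurd h1 hav
      · exact h1
    set c := r.takeUntil a har with hc
    have hcpath : c.IsPath := hrpath.takeUntil har
    have hvnc : v ∉ c.support := fun hx => hvnr (Walk.support_takeUntil_subset r har hx)
    have hdpath : (Walk.cons hw c).IsPath := hcpath.cons hvnc
    have hcyc : (Walk.cons ha (Walk.cons hw c)).IsCycle := by
      rw [Walk.cons_isCycle_iff]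
      refine ⟨hdpath, ?_⟩
      intro hmem
      rw [Walk.edges_cons] at hmem
      rcases List.mem_cons.mp hmem with h1 | h1
      · rw [Sym2.eq_iff] at h1
        rcases h1 with ⟨h1, h2⟩ | ⟨h1, h2⟩
        · exact hav h1
        · exact haw h1
      · exact hvnc (Walk.snd_mem_support_of_mem_edges c h1)
    exact hG _ hcyc
  rw [key a ha, key b hb]

private lemma posdef_diag_pos {m : Type*} [Fintype m] [DecidableEq m] {M : Matrix m m ℝ}
    (h : M.PosDef) (i : m) : 0 < M i i := by
  have := h.dotProduct_mulVec_pos (x := Pi.single i 1) (by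
    intro hz
    have := congrFun hz i
    simp [Pi.single_apply] at this)
  simpa [dotProduct, mulVec, Pi.single_apply, Finset.sum_ite_eq, mul_comm] using this

private lemma reach_pullback {n : ℕ} (G : SimpleGraph (Fin (n+1))) (G' : SimpleGraph (Fin n))
    (v : Fin (n+1))
    (hadj : ∀ k l, G'.Adj k l ↔ G.Adj (v.succAbove k) (v.succAbove l)) :
    ∀ {a c : Fin (n+1)} (w : G.Walk a c), v ∉ w.support →
      ∀ k l, v.succAbove k = a → v.succAbove l = c → G'.Reachable k l := by
  intro a c w
  induction w with
  | nil =>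
    intro _ k l hk hl
    cases Fin.succAbove_right_injective (hk.trans hl.symm)
    exact Reachable.refl _
  | @cons a b c h w ih =>
    intro hv k l hk hl
    have hbv : b ≠ v := by
      intro hbv; subst hbv
      exact hv (by simp [Walk.support_cons])
    obtain ⟨m, hm⟩ := Fin.exists_succAbove_eq hbv
    have hadj' : G'.Adj k m := (hadj k m).2 (by rw [hk, hm]; exact h)
    exact hadj'.reachable.trans
      (ih (by simp [Walk.support_cons] at hv; exact fun hh => hv.2 hh) m l hm hl)

private lemma aux : ∀ (n : ℕ) (Θ : Matrix (Fin n) (Fin n) ℝ), Θ.IsSymm → Θ.PosDef →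
    (SimpleGraph.fromRel (fun i j : Fin n => Θ i j ≠ 0)).IsAcyclic →
    ∀ i j : Fin n, (SimpleGraph.fromRel (fun i j : Fin n => Θ i j ≠ 0)).Reachable i j →
      Θ⁻¹ i j ≠ 0 := by
  intro n
  induction n with
  | zero => intro _ _ _ _ i; exact i.elim0
  | succ n ih =>
    intro Θ hsymm hpd hforest i j hreach
    set G := SimpleGraph.fromRel (fun i j : Fin (n+1) => Θ i j ≠ 0) with hGdef
    have hΘsym : ∀ x y, Θ x y = Θ y x := fun x y => (congrFun (congrFun hsymm x) y).symm
    by_cases hij : i = j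
    · subst hij
      exact (posdef_diag_pos hpd.inv i).ne'
    obtain ⟨v, hleaf⟩ := exists_leaf G hforest
    set e := v.succAbove with he
    have einj : Function.Injective e := Fin.succAbove_right_injective
    set d := Θ v v with hd
    have hdpos : 0 < d := posdef_diag_pos hpd v
    have hd0 : d ≠ 0 := hdpos.ne'
    set b : Fin n → ℝ := fun k => Θ (e k) v with hb
    have hbk : ∀ k, Θ (e k) v = b k := fun k => rfl
    have hbk' : ∀ k, Θ v (e k) = b k := fun k => hΘsym v (e k)
    set A' : Matrix (Fin n) (Fin n) ℝ :=
      Matrix.of (fun k l => Θ (e k) (e l) - b k * b l / d) with hA'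
    have hA'app : ∀ k l, A' k l = Θ (e k) (e l) - b k * b l / d := fun k l => rfl
    have hΘA : ∀ k l, Θ (e k) (e l) = A' k l + b k * b l / d := by
      intro k l; rw [hA'app]; ring
    have hbadj : ∀ k, b k ≠ 0 → G.Adj (e k) v := by
      intro k hk
      rw [hGdef, SimpleGraph.fromRel_adj]
      exact ⟨Fin.succAbove_ne v k, Or.inl hk⟩
    have hbone : ∀ k l, b k ≠ 0 → b l ≠ 0 → k = l := by
      intro k l hk hl
      exact einj (hleaf _ (hbadj k hk) _ (hbadj l hl))
    have hbzero : ∀ k l, k ≠ l → b k * b l = 0 := by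
      intro k l hkl
      by_contra h
      exact hkl (hbone k l (fun h0 => h (by rw [h0, zero_mul]))
        (fun h0 => h (by rw [h0, mul_zero])))
    have hA'sym : ∀ k l, A' k l = A' l k := by
      intro k l; rw [hA'app, hA'app, hΘsym (e k) (e l)]; ring
    have hA'symm : A'.IsSymm := by
      apply Matrix.IsSymm.ext; intro k l; exact hA'sym l k
    have hrw : ∀ f : Fin (n+1) → ℝ, ∑ i, f i = f v + ∑ i, f (v.succAbove i) :=
      fun f => Fin.sum_univ_succAbove f v
    -- A' positive definite
    have hA'pd : A'.PosDef := by
      rw [Matrix.posDef_iff_dotProduct_mulVec]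
      constructor
      · show A'ᴴ = A'
        ext k l
        simp only [Matrix.conjTranspose_apply, star_trivial]
        exact hA'sym l k
      · intro x hx
        set s : ℝ := ∑ l, b l * x l with hs
        set y : Fin (n+1) → ℝ := v.insertNth (-(s/d)) x with hy
        have hy0 : y ≠ 0 := by
          intro h
          apply hx
          funext k
          have := congrFun h (e k)
          simpa [hy, he, Fin.insertNth_apply_succAbove] using this
        have hq := hpd.dotProduct_mulVec_pos hy0
        have hyv : y v = -(s/d) := by simp [hy]
        have hye : ∀ k, y (e k) = x k := by
          intro k; simp [hy, he, Fin.insertNth_apply_succAbove]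
        have expand : star y ⬝ᵥ Θ *ᵥ y = star x ⬝ᵥ A' *ᵥ x := by
          simp only [star_trivial, dotProduct, mulVec, hrw, hyv, ← he, hye, hbk, hbk', ← hd]
          have hL : ∀ k, x k * (b k * -(s/d) + ∑ l, Θ (e k) (e l) * x l)
              = x k * (∑ l, Θ (e k) (e l) * x l) + (b k * x k) * (-(s/d)) := by
            intro k; ring
          have hR : ∀ k, (∑ l, (A' k l) * x l)
              = (∑ l, Θ (e k) (e l) * x l) - (b k / d) * s := by
            intro k
            calc ∑ l, A' k l * x l
                = ∑ l, (Θ (e k) (e l) * x l - (b k / d) * (b l * x l)) := by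
                  refine Finset.sum_congr rfl fun l _ => ?_
                  rw [hA'app]; ring
              _ = (∑ l, Θ (e k) (e l) * x l) - (b k / d) * ∑ l, b l * x l := by
                  rw [Finset.sum_sub_distrib, Finset.mul_sum]
              _ = _ := by rw [← hs]
          calc -(s/d) * (d * -(s/d) + ∑ l, b l * x l)
                + ∑ k, x k * (b k * -(s/d) + ∑ l, Θ (e k) (e l) * x l)
              = -(s/d) * (d * -(s/d) + s)
                + ((∑ k, x k * (∑ l, Θ (e k) (e l) * x l))
                  + (∑ k, b k * x k) * (-(s/d))) := by
                rw [← hs, Finset.sum_congr rfl fun k _ => hL k, Finset.sum_add_distrib,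
                  ← Finset.sum_mul]
            _ = (∑ k, x k * (∑ l, Θ (e k) (e l) * x l)) - s * (s / d) := by
                rw [← hs]; field_simp; ring
            _ = ∑ k, x k * ((∑ l, Θ (e k) (e l) * x l) - (b k / d) * s) := by
                rw [Finset.sum_congr rfl fun k (_ : k ∈ Finset.univ) =>
                  (mul_sub (x k) _ _ : x k * _ = _), Finset.sum_sub_distrib]
                congr 1
                refine (?_ : (∑ k, x k * ((b k / d) * s)) = s * (s / d)).symm
                calc ∑ k, x k * ((b k / d) * s)
                    = ∑ k, (b k * x k) * (s / d) := by
                      refine Finset.sum_congr rfl fun k _ => ?_; ring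
                  _ = (∑ k, b k * x k) * (s / d) := by rw [Finset.sum_mul]
                  _ = s * (s / d) := by rw [← hs]
            _ = ∑ k, x k * ∑ l, A' k l * x l := by
                refine (Finset.sum_congr rfl fun k _ => ?_).symm
                rw [hR k]
        rw [← expand]; exact hq
    -- graph correspondence
    set G' := SimpleGraph.fromRel (fun k l : Fin n => A' k l ≠ 0) with hG'def
    have hadj : ∀ k l, G'.Adj k l ↔ G.Adj (e k) (e l) := by
      intro k l
      rw [hG'def, hGdef, SimpleGraph.fromRel_adj, SimpleGraph.fromRel_adj]
      constructor
      · rintro ⟨hkl, h | h⟩ <;>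
          [skip; rw [hA'sym l k] at h] <;>
          · refine ⟨fun hh => hkl (einj hh), Or.inl ?_⟩
            rwa [hA'app, hbzero k l hkl, zero_div, sub_zero] at h
      · rintro ⟨hkl, h | h⟩ <;>
          [skip; rw [hΘsym (e l) (e k)] at h] <;>
          · have hkl' : k ≠ l := fun hh => hkl (by rw [hh])
            refine ⟨hkl', Or.inl ?_⟩
            rwa [hA'app, hbzero k l hkl', zero_div, sub_zero]
    have hforest' : G'.IsAcyclic := by
      intro k c hc
      exact hforest (c.map ⟨e, fun {a b} h => (hadj a b).1 h⟩)
        (hc.map (fun a b hab => einj hab))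
    -- inverse of A'
    have hdet : IsUnit A'.det := isUnit_iff_ne_zero.mpr hA'pd.det_pos.ne'
    set S := A'⁻¹ with hS
    have hAS : ∀ k l, (∑ m, A' k m * S m l) = if k = l then 1 else 0 := by
      intro k l
      have := congrFun (congrFun (Matrix.mul_nonsing_inv A' hdet) k) l
      rwa [Matrix.mul_apply, Matrix.one_apply] at this
    have hSsym : ∀ k l, S k l = S l k := by
      intro k l
      have h1 : A'⁻¹ᵀ = A'⁻¹ := by
        rw [Matrix.transpose_nonsing_inv, hA'symm.eq]
      exact (congrFun (congrFun h1 k) l).symm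
    set g : Fin n → ℝ := fun k => -(∑ l, S k l * b l) / d with hg
    have hgl : ∀ l, (∑ m, S l m * b m) = -(d * g l) := by
      intro l; rw [hg]; field_simp
    set B := ∑ k, ∑ l, b k * (S k l * b l) with hB
    set t : ℝ := 1/d + B/d^2 with ht
    set M : Matrix (Fin (n+1)) (Fin (n+1)) ℝ :=
      Matrix.of (v.insertNth (v.insertNth t g) (fun k => v.insertNth (g k) (S k))) with hM
    have hMvv : M v v = t := by
      simp [hM, Fin.insertNth_apply_same]
    have hMve : ∀ l, M v (e l) = g l := by
      intro l; simp [hM, he, Fin.insertNth_apply_same, Fin.insertNth_apply_succAbove]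
    have hMev : ∀ k, M (e k) v = g k := by
      intro k; simp [hM, he, Fin.insertNth_apply_same, Fin.insertNth_apply_succAbove]
    have hMee : ∀ k l, M (e k) (e l) = S k l := by
      intro k l; simp [hM, he, Fin.insertNth_apply_succAbove]
    have hbS : ∀ l, ∑ m, b m * S m l = -(d * g l) := by
      intro l
      rw [← hgl l]
      refine Finset.sum_congr rfl fun m _ => ?_
      rw [hSsym m l]; ring
    have hbg : ∑ m, b m * g m = -(B / d) := by
      calc ∑ m, b m * g m
          = ∑ m, -(∑ l, b m * (S m l * b l)) / d := by
            refine Finset.sum_congr rfl fun m _ => ?_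
            have h0 : ∑ l, b m * (S m l * b l) = b m * ∑ l, S m l * b l := by
              rw [Finset.mul_sum]
            rw [hg, h0]; ring
        _ = -(B / d) := by
            rw [← Finset.sum_div, Finset.sum_neg_distrib, neg_div, hB]
    have hAg : ∀ k, ∑ m, A' k m * g m = -(b k) / d := by
      intro k
      calc ∑ m, A' k m * g m
          = ∑ m, -(∑ l, (A' k m * S m l) * b l) / d := by
            refine Finset.sum_congr rfl fun m _ => ?_
            have h0 : ∑ l, (A' k m * S m l) * b l = A' k m * ∑ l, S m l * b l := by
              rw [Finset.mul_sum]
              refine Finset.sum_congr rfl fun l _ => ?_; ring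
            rw [hg, h0]; ring
        _ = -(∑ l, ∑ m, (A' k m * S m l) * b l) / d := by
            rw [← Finset.sum_div, Finset.sum_neg_distrib, Finset.sum_comm]
        _ = -(∑ l, (∑ m, A' k m * S m l) * b l) / d := by
            rw [Finset.sum_congr rfl fun l (_ : l ∈ Finset.univ) =>
              (Finset.sum_mul Finset.univ (fun m => A' k m * S m l) (b l)).symm]
        _ = -(b k) / d := by
            rw [Finset.sum_congr rfl fun l (_ : l ∈ Finset.univ) =>
              (by rw [hAS k l] : (∑ m, A' k m * S m l) * b l
                = (if k = l then 1 else 0) * b l)]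
            simp [ite_mul]
    have hright : Θ * M = 1 := by
      ext x y
      rw [Matrix.mul_apply, hrw (fun z => Θ x z * M z y)]
      rcases eq_or_ne x v with hxv | hx
      · rw [hxv]
        rcases eq_or_ne y v with hyv | hy
        · rw [hyv, Matrix.one_apply_eq, hMvv, ← hd]
          have h1 : ∀ k, Θ v (v.succAbove k) * M (v.succAbove k) v = b k * g k := by
            intro k
            rw [show v.succAbove k = e k from rfl, hbk', hMev]
          rw [Finset.sum_congr rfl fun k _ => h1 k, hbg, ht]
          field_simp
          ring
        · obtain ⟨l, hl⟩ := Fin.exists_succAbove_eq hy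
          rw [← hl, Matrix.one_apply_ne (Ne.symm (Fin.succAbove_ne v l)),
            show v.succAbove l = e l from rfl, hMve, ← hd]
          have h1 : ∀ k, Θ v (v.succAbove k) * M (v.succAbove k) (e l) = b k * S k l := by
            intro k
            rw [show v.succAbove k = e k from rfl, hbk', hMee]
          rw [Finset.sum_congr rfl fun k _ => h1 k, hbS l]
          ring
      · obtain ⟨k, hk⟩ := Fin.exists_succAbove_eq hx
        rcases eq_or_ne y v with hyv | hy
        · rw [hyv, ← hk, Matrix.one_apply_ne (Fin.succAbove_ne v k),
            show v.succAbove k = e k from rfl, hbk, hMvv]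
          have h1 : ∀ m, Θ (e k) (v.succAbove m) * M (v.succAbove m) v
              = A' k m * g m + (b k / d) * (b m * g m) := by
            intro m
            rw [show v.succAbove m = e m from rfl, hMev, hΘA]
            ring
          rw [Finset.sum_congr rfl fun m _ => h1 m, Finset.sum_add_distrib,
            ← Finset.mul_sum, hAg k, hbg, ht]
          field_simp
          ring
        · obtain ⟨l, hl⟩ := Fin.exists_succAbove_eq hy
          rw [← hk, ← hl, show v.succAbove k = e k from rfl,
            show v.succAbove l = e l from rfl, hMve, hbk]
          have h1 : ∀ m, Θ (e k) (v.succAbove m) * M (v.succAbove m) (e l)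
              = A' k m * S m l + (b k / d) * (b m * S m l) := by
            intro m
            rw [show v.succAbove m = e m from rfl, hMee, hΘA]
            ring
          rw [Finset.sum_congr rfl fun m _ => h1 m, Finset.sum_add_distrib,
            ← Finset.mul_sum, hAS k l, hbS l]
          have hone : (1 : Matrix (Fin (n+1)) (Fin (n+1)) ℝ) (e k) (e l)
              = if k = l then 1 else 0 := by
            rw [Matrix.one_apply, if_congr (einj.eq_iff) rfl rfl]
          rw [hone, show (b k / d) * (-(d * g l)) = -(b k * g l) by field_simp]
          ring
    have hinv : Θ⁻¹ = M := Matrix.inv_eq_right_inv hright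
    rw [hinv]
    have hMsym : ∀ x y, M x y = M y x := by
      intro x y
      have h1 : Θ⁻¹ᵀ = Θ⁻¹ := by rw [Matrix.transpose_nonsing_inv, hsymm.eq]
      have h2 := congrFun (congrFun h1 x) y
      rw [Matrix.transpose_apply] at h2
      rw [← hinv]
      exact h2.symm
    have main2 : ∀ (x : Fin (n+1)), x ≠ v → G.Reachable x v →
        ∀ k, e k = x → g k ≠ 0 := by
      intro x hxv hr k hk
      obtain ⟨q, hq⟩ : ∃ q : G.Walk x v, q.IsPath :=
        hr.elim_path fun p => ⟨p.1, p.2⟩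
      obtain ⟨w, hvw, r, hre⟩ := (q.reverse).exists_eq_cons_of_ne (Ne.symm hxv)
      have hqrp : (q.reverse).IsPath := hq.reverse
      have hwv : w ≠ v := hvw.ne'
      obtain ⟨u', hu'⟩ := Fin.exists_succAbove_eq hwv
      have hΘwv : Θ w v ≠ 0 := by
        have hvw2 := hvw
        rw [hGdef, SimpleGraph.fromRel_adj] at hvw2
        rcases hvw2.2 with h | h
        · exact fun h0 => h ((hΘsym v w).trans h0)
        · exact h
      have hbu' : b u' ≠ 0 := by
        show Θ (e u') v ≠ 0
        rw [show (e u' : Fin (n+1)) = w from hu']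
        exact hΘwv
      have hvnr : v ∉ r.support := by
        rw [hre] at hqrp
        have h2 := hqrp.2
        simp only [Walk.support_cons, List.nodup_cons] at h2
        exact h2.1
      have hreach' : G'.Reachable u' k :=
        reach_pullback G G' v hadj r hvnr u' k hu' hk
      have hSku' : S k u' ≠ 0 := by
        rw [hS]
        exact ih A' hA'symm hA'pd hforest' k u' hreach'.symm
      have hsum : (∑ l, S k l * b l) = S k u' * b u' := by
        refine Finset.sum_eq_single u' (fun l _ hl => ?_)
          (fun h => absurd (Finset.mem_univ _) h)
        have hbl : b l = 0 := by
          by_contra h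
          exact hl (hbone l u' h hbu')
        rw [hbl, mul_zero]
      show -(∑ l, S k l * b l)/d ≠ 0
      rw [hsum]
      exact div_ne_zero (neg_ne_zero.mpr (mul_ne_zero hSku' hbu')) hd0
    rcases eq_or_ne j v with hjv | hjv
    · have hiv : i ≠ v := by rw [← hjv]; exact hij
      obtain ⟨k, hk⟩ := Fin.exists_succAbove_eq hiv
      rw [← hk, hjv, show v.succAbove k = e k from rfl, hMev]
      exact main2 i hiv (hjv ▸ hreach) k hk
    rcases eq_or_ne i v with hiv | hiv
    · obtain ⟨l, hl⟩ := Fin.exists_succAbove_eq hjv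
      rw [hiv, ← hl, show v.succAbove l = e l from rfl, hMsym v (e l), hMev]
      exact main2 j hjv (hiv ▸ hreach.symm) l hl
    · obtain ⟨k, hk⟩ := Fin.exists_succAbove_eq hiv
      obtain ⟨l, hl⟩ := Fin.exists_succAbove_eq hjv
      rw [← hk, ← hl, show v.succAbove k = e k from rfl,
        show v.succAbove l = e l from rfl, hMee]
      obtain ⟨q, hq⟩ : ∃ q : G.Walk i j, q.IsPath :=
        hreach.elim_path fun p => ⟨p.1, p.2⟩
      have hvq : v ∉ q.support := by
        intro hv
        have hq1 : (q.takeUntil v hv).IsPath := hq.takeUntil hv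
        have hq2 : (q.dropUntil v hv).IsPath := hq.dropUntil hv
        obtain ⟨w1, hw1, r1, hre1⟩ :=
          ((q.takeUntil v hv).reverse).exists_eq_cons_of_ne (Ne.symm hiv)
        obtain ⟨w2, hw2, r2, hre2⟩ :=
          (q.dropUntil v hv).exists_eq_cons_of_ne (Ne.symm hjv)
        have hww : w1 = w2 := hleaf w1 hw1.symm w2 hw2.symm
        have hw1mem : w1 ∈ (q.takeUntil v hv).support := by
          have h3 : w1 ∈ ((q.takeUntil v hv).reverse).support := by
            rw [hre1, Walk.support_cons]
            exact List.mem_cons_of_mem _ (Walk.start_mem_support r1)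
          rwa [Walk.support_reverse, List.mem_reverse] at h3
        have hw2mem : w2 ∈ (q.dropUntil v hv).support.tail := by
          rw [hre2, Walk.support_cons, List.tail_cons]
          exact Walk.start_mem_support r2
        have hnodup := hq.2
        rw [← Walk.take_spec q hv, Walk.support_append] at hnodup
        exact List.disjoint_of_nodup_append hnodup hw1mem (hww ▸ hw2mem)
      have hreach' : G'.Reachable k l := reach_pullback G G' v hadj q hvq k l hk hl
      rw [hS]
      exact ih A' hA'symm hA'pd hforest' k l hreach'

end ForestAux

/-- if Θ is symmetric positive definite and the graph with an edge between
distinct i, j iff Θ_{ij} ≠ 0 is a forest, then for every pair i, j in the same connected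
component of that graph, the (i,j) entry of Σ = Θ⁻¹ is nonzero. -/
theorem inverse_entry_nonzero_of_reachable_in_forest
    {p : ℕ} (hp : 1 ≤ p)
    (Θ : Matrix (Fin p) (Fin p) ℝ) (hsymm : Θ.IsSymm) (hpd : Θ.PosDef)
    (hforest : (SimpleGraph.fromRel (fun i j : Fin p => Θ i j ≠ 0)).IsAcyclic) :
    ∀ i j : Fin p,
      (SimpleGraph.fromRel (fun i j : Fin p => Θ i j ≠ 0)).Reachable i j →
        Θ⁻¹ i j ≠ 0 := by
  intro i j h
  exact ForestAux.aux p Θ hsymm hpd hforest i j h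
end
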